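/- arXiv:2408.11695 — 4 statements merged into one kernel-verified Lean document; each statement's English description precedes it below -/
import Mathlib

section
/- Let a > 0, b > 0, c > 0, ω ∈ ℝ, and let s > 0 satisfy s^a > |ω|. Then ∫₀^∞ e^{−st} t^{b−1} M^c_{a,b}(−ω t^a) dt = s^{ac−b} / (s^a + ω)^c, where M^c_{a,b}(z) = Σ_{n=0}^∞ (c)_n z^n / (n! Γ(an + b)) is the three-parameter (Prabhakar) Mittag-Leffler function and (c)_n is the Pochhammer symbol. -/
open MeasureTheory Real Filter

lemma poch_pos {c : ℝ} (hc : 0 < c) (n : ℕ) : 0 < (ascPochhammer ℝ n).eval c := by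
  induction n with
  | zero => simp
  | succ n ih =>
      rw [ascPochhammer_succ_eval]
      positivity

lemma gamma_add_nat {c : ℝ} (hc : 0 < c) (n : ℕ) :
    Real.Gamma (c + n) = (ascPochhammer ℝ n).eval c * Real.Gamma c := by
  induction n with
  | zero => simp
  | succ n ih =>
      have h : c + (n + 1 : ℕ) = (c + n) + 1 := by push_cast; ring
      rw [h, Real.Gamma_add_one (by positivity), ih, ascPochhammer_succ_eval]
      ring

lemma summable_aux {c x : ℝ} (hc : 0 < c) (hx : |x| < 1) :
    Summable (fun n : ℕ => (ascPochhammer ℝ n).eval c * x ^ n / n.factorial) := by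
  rcases eq_or_ne x 0 with rfl | hx0
  · apply summable_of_ne_finset_zero (s := {0})
    intro n hn
    simp [zero_pow (by simpa using hn)]
  · apply summable_of_ratio_test_tendsto_lt_one hx
    · filter_upwards with n
      have h1 := poch_pos hc n
      exact div_ne_zero (mul_ne_zero h1.ne' (pow_ne_zero _ hx0))
        (by exact_mod_cast n.factorial_ne_zero)
    · have key : ∀ n : ℕ, ‖(ascPochhammer ℝ (n+1)).eval c * x ^ (n+1) / (n+1).factorial‖ /
          ‖(ascPochhammer ℝ n).eval c * x ^ n / n.factorial‖ = |x| * ((c + n) / (n + 1)) := by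
        intro n
        rw [ascPochhammer_succ_eval, Nat.factorial_succ]
        have h1 := poch_pos hc n
        have h2 : (0:ℝ) < n.factorial := by exact_mod_cast n.factorial_pos
        have h3 : (0:ℝ) < c + n := by positivity
        have h4 : (0:ℝ) < (n:ℝ) + 1 := by positivity
        have h5 : (0:ℝ) < |x| := abs_pos.mpr hx0
        simp only [Real.norm_eq_abs, abs_div, abs_mul, abs_pow, Nat.cast_mul, Nat.cast_add,
          Nat.cast_one, pow_succ]
        rw [abs_of_pos h1, abs_of_pos h3, abs_of_pos h2, abs_of_pos h4]
        field_simp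
      simp_rw [key]
      have h0 : Tendsto (fun n : ℕ => (c - 1)/((n:ℝ)+1) + 1) atTop (nhds (0+1)) := by
        refine Tendsto.add ?_ tendsto_const_nhds
        have := (tendsto_const_div_atTop_nhds_zero_nat (c-1)).comp (tendsto_add_atTop_nat 1)
        refine this.congr fun n => ?_
        simp only [Function.comp]
        push_cast
        ring
      have h1 : Tendsto (fun n : ℕ => (c + n) / ((n:ℝ) + 1)) atTop (nhds 1) := by
        have heq : ∀ n : ℕ, (c - 1)/((n:ℝ)+1) + 1 = (c + n) / ((n:ℝ) + 1) := by
          intro n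
          have h4 : ((n:ℝ) + 1) ≠ 0 := by positivity
          field_simp
          ring
        simp_rw [heq] at h0
        simpa using h0
      simpa using tendsto_const_nhds.mul h1
lemma gamma_int {p s : ℝ} (hp : 0 < p) (hs : 0 < s) :
    ∫ t in Set.Ioi (0:ℝ), Real.exp (-(s*t)) * t ^ (p-1) = Real.Gamma p / s ^ p := by
  have h := integral_rpow_mul_exp_neg_mul_Ioi hp hs
  rw [show (1/s : ℝ) ^ p = (s ^ p)⁻¹ by
    rw [one_div, ← Real.rpow_neg_one, ← Real.rpow_mul hs.le, neg_one_mul, Real.rpow_neg hs.le]] at h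
  rw [div_eq_inv_mul, ← h]
  refine setIntegral_congr_fun measurableSet_Ioi fun t ht => ?_
  ring

lemma gamma_integrable {p s : ℝ} (hp : 0 < p) (hs : 0 < s) :
    IntegrableOn (fun t : ℝ => Real.exp (-(s*t)) * t ^ (p-1)) (Set.Ioi 0) := by
  have := integrableOn_rpow_mul_exp_neg_mul_rpow (p := 1) (s := p - 1) (b := s)
    (by linarith) one_pos hs
  refine (this.congr_fun (fun t ht => ?_) measurableSet_Ioi)
  beta_reduce
  rw [Real.rpow_one]
  ring

lemma termwise {a b s : ℝ} (g : ℕ → ℝ) (ha : 0 < a) (hb : 0 < b) (hs : 0 < s)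
    (hsum : Summable (fun n : ℕ => |g n| * (Real.Gamma (a*n+b) / s ^ (a*n+b)))) :
    ∫ t in Set.Ioi (0:ℝ), (∑' n : ℕ, g n * t ^ (a*n)) * (Real.exp (-(s*t)) * t ^ (b-1)) =
      ∑' n : ℕ, g n * (Real.Gamma (a*n+b) / s ^ (a*n+b)) := by
  set F : ℕ → ℝ → ℝ := fun n t => g n * t ^ (a*n) * (Real.exp (-(s*t)) * t ^ (b-1)) with hF
  have hpb : ∀ n : ℕ, (0:ℝ) < a*n+b := fun n => by positivity
  have hmeas : ∀ n : ℕ, AEStronglyMeasurable (F n) (volume.restrict (Set.Ioi 0)) := by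
    intro n
    apply Measurable.aestronglyMeasurable
    fun_prop
  have hInt : ∀ n : ℕ, IntegrableOn (F n) (Set.Ioi 0) := by
    intro n
    have h : IntegrableOn (fun t : ℝ => g n * (Real.exp (-(s*t)) * t ^ (a*n+b-1)))
        (Set.Ioi 0) := (gamma_integrable (hpb n) hs).const_mul (g n)
    refine h.congr_fun (fun t ht => ?_) measurableSet_Ioi
    simp only [hF]
    rw [show a*n+b-1 = a*n + (b-1) by ring, Real.rpow_add ht]
    ring
  have hnorm : ∀ n : ℕ, ∀ t ∈ Set.Ioi (0:ℝ),
      ‖F n t‖ = |g n| * (Real.exp (-(s*t)) * t ^ (a*n+b-1)) := by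
    intro n t ht
    have ht' : (0:ℝ) < t := ht
    simp only [hF, Real.norm_eq_abs, abs_mul]
    rw [abs_of_pos (Real.rpow_pos_of_pos ht' _), abs_of_pos (Real.exp_pos _),
      abs_of_pos (Real.rpow_pos_of_pos ht' _),
      show a*n+b-1 = a*n + (b-1) by ring, Real.rpow_add ht']
    ring
  have hL : ∀ n : ℕ, ∫⁻ t in Set.Ioi (0:ℝ), ‖F n t‖₊ =
      ENNReal.ofReal (|g n| * (Real.Gamma (a*n+b) / s ^ (a*n+b))) := by
    intro n
    have h1 : ∫⁻ t in Set.Ioi (0:ℝ), (‖F n t‖₊ : ENNReal) =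
        ∫⁻ t in Set.Ioi (0:ℝ), ENNReal.ofReal ‖F n t‖ := by
      simp only [ofReal_norm, enorm_eq_nnnorm]
    rw [h1, ← ofReal_integral_eq_lintegral_ofReal (hInt n).norm
      (Eventually.of_forall fun t => norm_nonneg _)]
    congr 1
    rw [setIntegral_congr_fun measurableSet_Ioi (hnorm n), integral_const_mul,
      gamma_int (hpb n) hs]
  have hne : (∑' n : ℕ, ∫⁻ t in Set.Ioi (0:ℝ), ‖F n t‖₊) ≠ ⊤ := by
    simp_rw [hL]
    rw [← ENNReal.ofReal_tsum_of_nonneg (fun n => by positivity) hsum]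
    exact ENNReal.ofReal_ne_top
  have swap := integral_tsum hmeas hne
  have hlhs : ∀ t : ℝ, (∑' n : ℕ, g n * t ^ (a*n)) * (Real.exp (-(s*t)) * t ^ (b-1)) =
      ∑' n : ℕ, F n t := fun t => (tsum_mul_right).symm
  simp_rw [hlhs]
  rw [swap]
  refine tsum_congr fun n => ?_
  rw [show (∫ t in Set.Ioi (0:ℝ), F n t) =
      ∫ t in Set.Ioi (0:ℝ), g n * (Real.exp (-(s*t)) * t ^ (a*n+b-1)) from
    setIntegral_congr_fun measurableSet_Ioi fun t ht => ?_, integral_const_mul,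
    gamma_int (hpb n) hs]
  simp only [hF]
  rw [show a*n+b-1 = a*n + (b-1) by ring, Real.rpow_add ht]
  ring
lemma binomial {c x : ℝ} (hc : 0 < c) (hx : |x| < 1) :
    ∑' n : ℕ, (ascPochhammer ℝ n).eval c * x ^ n / n.factorial = (1-x) ^ (-c : ℝ) := by
  have hx1 : x < 1 := lt_of_le_of_lt (le_abs_self x) hx
  have h1x : (0:ℝ) < 1 - x := by linarith
  have hΓ : 0 < Real.Gamma c := Real.Gamma_pos_of_pos hc
  set g : ℕ → ℝ := fun n => x ^ n / n.factorial with hg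
  have hfact : ∀ n : ℕ, (0:ℝ) < n.factorial := fun n => by exact_mod_cast n.factorial_pos
  have hsum : Summable (fun n : ℕ => |g n| * (Real.Gamma (1*n+c) / (1:ℝ) ^ ((1:ℝ)*n+c))) := by
    have h := (summable_aux hc (x := |x|) (by rwa [abs_abs])).mul_right (Real.Gamma c)
    refine h.congr fun n => ?_
    rw [Real.one_rpow, div_one, one_mul, add_comm ((n:ℕ):ℝ) c, gamma_add_nat hc n]
    simp only [hg, abs_div, abs_pow, abs_of_pos (hfact n)]
    ring
  have key := termwise g one_pos hc one_pos hsum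
  have hlhs : ∀ t ∈ Set.Ioi (0:ℝ),
      (∑' n : ℕ, g n * t ^ ((1:ℝ)*n)) * (Real.exp (-(1*t)) * t ^ (c-1)) =
      Real.exp (-((1-x)*t)) * t ^ (c-1) := by
    intro t ht
    have h1 : ∀ n : ℕ, g n * t ^ ((1:ℝ)*n) = (x*t) ^ n / n.factorial := by
      intro n
      rw [one_mul, Real.rpow_natCast, hg, mul_pow]
      ring
    simp_rw [h1]
    have hexp : ∑' n : ℕ, (x*t) ^ n / n.factorial = Real.exp (x*t) := by
      rw [Real.exp_eq_exp_ℝ, NormedSpace.exp_eq_tsum_div]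
    rw [hexp, ← mul_assoc, ← Real.exp_add, show x*t + -(1*t) = -((1-x)*t) by ring]
  rw [setIntegral_congr_fun measurableSet_Ioi hlhs, gamma_int hc h1x] at key
  have hrhs : (∑' n : ℕ, g n * (Real.Gamma (1*n+c) / (1:ℝ) ^ ((1:ℝ)*n+c))) =
      (∑' n : ℕ, (ascPochhammer ℝ n).eval c * x ^ n / n.factorial) * Real.Gamma c := by
    rw [← tsum_mul_right]
    refine tsum_congr fun n => ?_
    rw [Real.one_rpow, div_one, one_mul, add_comm ((n:ℕ):ℝ) c, gamma_add_nat hc n]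
    simp only [hg]
    ring
  rw [hrhs] at key
  rw [Real.rpow_neg h1x.le]
  refine eq_inv_of_mul_eq_one_left ?_
  have hpow : (0:ℝ) < (1-x) ^ (c:ℝ) := Real.rpow_pos_of_pos h1x c
  have h2 : Real.Gamma c * 1 = Real.Gamma c *
      ((∑' n : ℕ, (ascPochhammer ℝ n).eval c * x ^ n / n.factorial) * (1-x) ^ (c:ℝ)) := by
    rw [mul_one, ← mul_assoc, mul_comm (Real.Gamma c), ← key]
    field_simp
  exact (mul_left_cancel₀ hΓ.ne' h2).symm

/-- The three-parameter (Prabhakar) Mittag-Leffler function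
`M^c_{a,b}(z) = ∑ (c)ₙ zⁿ / (n! Γ(an + b))`, where `(c)ₙ` is the Pochhammer symbol. -/
noncomputable def prabhakarML (a b c z : ℝ) : ℝ :=
  ∑' n : ℕ, (ascPochhammer ℝ n).eval c * z ^ n / (n.factorial * Real.Gamma (a * n + b))

theorem laplace_prabhakarML
    (a b c ω : ℝ) (ha : 0 < a) (hb : 0 < b) (hc : 0 < c)
    (s : ℝ) (hs : 0 < s) (hsa : |ω| < s ^ a) :
    ∫ t in Set.Ioi (0 : ℝ),
        Real.exp (-s * t) * t ^ (b - 1) * prabhakarML a b c (-ω * t ^ a) =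
      s ^ (a * c - b) / (s ^ a + ω) ^ c := by
  have hsa0 : (0:ℝ) < s ^ a := Real.rpow_pos_of_pos hs a
  have hsb0 : (0:ℝ) < s ^ b := Real.rpow_pos_of_pos hs b
  have hsω : (0:ℝ) < s ^ a + ω := by
    have := (abs_lt.mp hsa).1
    linarith
  set g : ℕ → ℝ := fun n =>
    (ascPochhammer ℝ n).eval c * (-ω) ^ n / (n.factorial * Real.Gamma (a * n + b)) with hg
  have hfact : ∀ n : ℕ, (0:ℝ) < n.factorial := fun n => by exact_mod_cast n.factorial_pos
  have hΓab : ∀ n : ℕ, (0:ℝ) < Real.Gamma (a * n + b) :=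
    fun n => Real.Gamma_pos_of_pos (by positivity)
  set x : ℝ := -ω / s ^ a with hxdef
  have hxabs : |x| < 1 := by
    rw [hxdef, abs_div, abs_neg, abs_of_pos hsa0, div_lt_one hsa0]
    exact hsa
  -- summability
  have hsum : Summable (fun n : ℕ => |g n| * (Real.Gamma (a*n+b) / s ^ (a*n+b))) := by
    have h := (summable_aux hc (x := |x|) (by rwa [abs_abs])).mul_right ((s ^ b)⁻¹)
    refine h.congr fun n => ?_
    have hpow : s ^ (a*(n:ℕ)+b) = (s ^ a) ^ (n:ℕ) * s ^ b := by
      rw [Real.rpow_add hs, Real.rpow_mul hs.le, Real.rpow_natCast]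
    have hxn : |x| ^ n = |ω| ^ n / (s ^ a) ^ n := by
      rw [hxdef, abs_div, abs_neg, abs_of_pos hsa0, div_pow]
    rw [hxn, hpow]
    simp only [hg, abs_div, abs_mul, abs_pow, abs_neg, abs_of_pos (poch_pos hc n),
      abs_of_pos (hfact n), abs_of_pos (hΓab n)]
    have h1 := (poch_pos hc n).ne'
    have h2 := (hfact n).ne'
    have h3 := (hΓab n).ne'
    have h4 := hsa0.ne'
    have h5 := hsb0.ne'
    field_simp
  have key := termwise g ha hb hs hsum
  -- integrand matches
  have hlhs : ∀ t ∈ Set.Ioi (0:ℝ),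
      Real.exp (-s * t) * t ^ (b - 1) * prabhakarML a b c (-ω * t ^ a) =
      (∑' n : ℕ, g n * t ^ (a*n)) * (Real.exp (-(s*t)) * t ^ (b-1)) := by
    intro t ht
    have ht' : (0:ℝ) < t := ht
    have hterm : ∀ n : ℕ,
        (ascPochhammer ℝ n).eval c * (-ω * t ^ a) ^ n /
          (n.factorial * Real.Gamma (a * n + b)) = g n * t ^ (a*n) := by
      intro n
      rw [mul_pow, show t ^ (a*(n:ℕ)) = (t ^ a) ^ (n:ℕ) by
        rw [Real.rpow_mul ht'.le, Real.rpow_natCast], hg]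
      ring
    rw [prabhakarML]
    simp_rw [hterm]
    rw [neg_mul]
    ring
  rw [setIntegral_congr_fun measurableSet_Ioi hlhs, key]
  -- compute the sum
  have hrhs : (∑' n : ℕ, g n * (Real.Gamma (a*n+b) / s ^ (a*n+b))) =
      (∑' n : ℕ, (ascPochhammer ℝ n).eval c * x ^ n / n.factorial) * (s ^ b)⁻¹ := by
    rw [← tsum_mul_right]
    refine tsum_congr fun n => ?_
    have hpow : s ^ (a*(n:ℕ)+b) = (s ^ a) ^ (n:ℕ) * s ^ b := by
      rw [Real.rpow_add hs, Real.rpow_mul hs.le, Real.rpow_natCast]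
    have hxn : x ^ n = (-ω) ^ n / (s ^ a) ^ n := by rw [hxdef, div_pow]
    rw [hxn, hpow, hg]
    have h2 := (hfact n).ne'
    have h3 := (hΓab n).ne'
    have h4 := hsa0.ne'
    have h5 := hsb0.ne'
    field_simp
  rw [hrhs, binomial hc hxabs]
  -- final algebra
  have h1x : (1 - x) = (s ^ a + ω) / s ^ a := by
    rw [hxdef]
    field_simp
    ring
  rw [h1x, Real.div_rpow hsω.le hsa0.le, ← Real.rpow_mul hs.le,
    show a * (-c) = -(a*c) by ring, Real.rpow_neg hsω.le, Real.rpow_neg hs.le,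
    Real.rpow_sub hs]
  have h6 : (s ^ a + ω) ^ (c:ℝ) ≠ 0 := (Real.rpow_pos_of_pos hsω c).ne'
  have h7 : s ^ (a*c) ≠ 0 := (Real.rpow_pos_of_pos hs _).ne'
  field_simp
end

section
/- Let β ∈ (0,1), ν ≥ 0, w ∈ ℝ and t > 0. Then ∫₀^t e^{−νu} u^{β−1} M_{β,β}(w u^β) du = e^{−νt} Σ_{m=0}^∞ ν^m t^{β+m} M_{β, β+m+1}(w t^β), where M_{a,b}(z) = Σ_{n=0}^∞ z^n / Γ(an + b) is the two-parameter Mittag-Leffler function. -/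
open MeasureTheory Real Filter

open scoped Nat

section Auxiliary
open Finset

lemma one_le_Gamma' {x : ℝ} (hx : 2 ≤ x) : 1 ≤ Real.Gamma x := by
  rcases eq_or_lt_of_le hx with h | h
  · simp [← h, Real.Gamma_two]
  · have := Real.Gamma_strictMonoOn_Ici (Set.mem_Ici.2 (le_refl 2)) (Set.mem_Ici.2 hx) h
    rw [Real.Gamma_two] at this; exact this.le

lemma fact_le_Gamma {x : ℝ} (hx : 2 ≤ x) (m : ℕ) : (m ! : ℝ) ≤ Real.Gamma (x + m) := by
  induction m with
  | zero => simpa using one_le_Gamma' hx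
  | succ m ih =>
    have hxm : (0:ℝ) < x + m := by positivity
    have key : Real.Gamma (x + ((m:ℕ)+1:ℕ)) = (x + m) * Real.Gamma (x + m) := by
      rw [show (x + ((m:ℕ)+1:ℕ) : ℝ) = (x + m) + 1 by push_cast; ring,
        Real.Gamma_add_one hxm.ne']
    rw [key]
    have h1 : ((m+1 : ℕ) : ℝ) ≤ x + m := by push_cast; linarith
    calc ((m+1)! : ℝ) = ((m+1:ℕ) : ℝ) * (m ! : ℝ) := by push_cast [Nat.factorial_succ]; ring
    _ ≤ (x + m) * Real.Gamma (x + m) :=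
      mul_le_mul h1 ih (by positivity) (by linarith)

lemma pow_div_factorial_le_exp {A : ℝ} (hA : 0 ≤ A) (m : ℕ) : A ^ m / m ! ≤ Real.exp A := by
  have h : Real.exp A = ∑' n : ℕ, A ^ n / n ! := by
    rw [Real.exp_eq_exp_ℝ, NormedSpace.exp_eq_tsum_div]
  rw [h]
  exact Summable.le_tsum (Real.summable_pow_div_factorial A) m (fun n _ => by positivity)

lemma fact_le_Gamma' {y : ℝ} (hy : 2 ≤ y) : ((⌊y⌋₊ - 2)! : ℝ) ≤ Real.Gamma y := by
  have h0 : (0:ℝ) ≤ y := by linarith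
  have h2 : 2 ≤ ⌊y⌋₊ := Nat.le_floor (by exact_mod_cast hy)
  have hc : ((⌊y⌋₊ - 2 : ℕ) : ℝ) = (⌊y⌋₊ : ℝ) - 2 := by
    push_cast [Nat.cast_sub h2]; ring
  have hx : 2 ≤ y - (⌊y⌋₊ - 2 : ℕ) := by
    rw [hc]; have := Nat.floor_le h0; linarith
  have := fact_le_Gamma hx (⌊y⌋₊ - 2)
  rwa [show y - ((⌊y⌋₊ - 2 : ℕ):ℝ) + ((⌊y⌋₊ - 2 : ℕ):ℝ) = y by ring] at this

set_option maxHeartbeats 1000000 in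
lemma summable_aux_s2 {a b : ℝ} (ha : 0 < a) (hb : 0 < b) (z : ℝ) :
    Summable (fun n : ℕ => |z| ^ n / Real.Gamma (a * n + b)) := by
  set r : ℝ := max |z| 1 with hr
  have hr1 : (1:ℝ) ≤ r := le_max_right _ _
  have hr0 : (0:ℝ) < r := by linarith
  have hrz : |z| ≤ r := le_max_left _ _
  set A : ℝ := (4 * r) ^ (1 / a) with hA
  have hA1 : (1:ℝ) ≤ A := Real.one_le_rpow (by linarith) (by positivity)
  have hA0 : (0:ℝ) < A := by linarith
  have hAa : A ^ a = 4 * r := by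
    rw [hA, ← Real.rpow_mul (by linarith : (0:ℝ) ≤ 4*r), one_div,
      inv_mul_cancel₀ ha.ne', Real.rpow_one]
  set C : ℝ := A ^ (3:ℝ) * Real.exp A with hC
  have hC0 : 0 < C := by positivity
  obtain ⟨N, hN⟩ : ∃ N : ℕ, ∀ n ≥ N, 2 ≤ a * n + b := by
    refine ⟨⌈2/a⌉₊, fun n hn => ?_⟩
    have h1 : (2:ℝ)/a ≤ n := le_trans (Nat.le_ceil _) (by exact_mod_cast hn)
    have : 2 ≤ a * n := by rw [div_le_iff₀ ha] at h1; linarith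
    linarith
  have key : ∀ n ≥ N, |z| ^ n / Real.Gamma (a * n + b) ≤ C * (1/4 : ℝ) ^ n := by
    intro n hn
    have h2 : 2 ≤ a * n + b := hN n hn
    have hΓpos : 0 < Real.Gamma (a * n + b) := Real.Gamma_pos_of_pos (by linarith)
    -- Gamma lower bound
    have hfl := fact_le_Gamma' h2
    set k : ℕ := ⌊a * n + b⌋₊ - 2 with hk
    have hk2 : 2 ≤ ⌊a * n + b⌋₊ := Nat.le_floor (by exact_mod_cast h2)
    have hkge : a * n + b - 3 ≤ (k:ℝ) := by
      have h1 : a * n + b < ⌊a * n + b⌋₊ + 1 := Nat.lt_floor_add_one _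
      have h3 : ((k:ℕ):ℝ) = (⌊a * n + b⌋₊ : ℝ) - 2 := by
        rw [hk, Nat.cast_sub hk2, Nat.cast_ofNat]
      rw [h3]; linarith
    have hkfact : (A ^ (k:ℕ) : ℝ) / Real.exp A ≤ (k ! : ℝ) := by
      rw [div_le_iff₀ (Real.exp_pos A)]
      have h4 := pow_div_factorial_le_exp hA0.le k
      rw [div_le_iff₀ (by positivity : (0:ℝ) < (k ! : ℝ))] at h4
      linarith
    have hΓge : (4*r)^n / C ≤ Real.Gamma (a * n + b) := by
      have e1 : (4*r)^n / C = A ^ ((a * n - 3 : ℝ)) / Real.exp A := by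
        rw [Real.rpow_sub hA0, Real.rpow_mul hA0.le, hAa, Real.rpow_natCast, hC, div_div]
      rw [e1]
      calc A ^ ((a * n - 3 : ℝ)) / Real.exp A
          ≤ A ^ ((a * n + b - 3 : ℝ)) / Real.exp A := by
            gcongr ?_ / _
            exact Real.rpow_le_rpow_of_exponent_le hA1 (by linarith)
        _ ≤ (A ^ (k:ℕ) : ℝ) / Real.exp A := by
            gcongr ?_ / _
            rw [← Real.rpow_natCast A k]
            exact Real.rpow_le_rpow_of_exponent_le hA1 hkge
        _ ≤ (k ! : ℝ) := hkfact
        _ ≤ Real.Gamma (a * n + b) := hfl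
    rw [div_le_iff₀ hΓpos]
    calc |z| ^ n ≤ r ^ n := pow_le_pow_left₀ (abs_nonneg z) hrz n
      _ = C * (1/4:ℝ)^n * ((4*r)^n / C) := by
          rw [show C * (1/4:ℝ)^n * ((4*r)^n / C) = (1/4:ℝ)^n * (4*r)^n * (C / C) by ring,
            div_self hC0.ne', mul_one, ← mul_pow, show (1/4:ℝ)*(4*r) = r by ring]
      _ ≤ C * (1/4:ℝ)^n * Real.Gamma (a * n + b) := by
          gcongr
  have hgeom : Summable (fun n : ℕ => C * (1/4 : ℝ) ^ n) :=
    (summable_geometric_of_lt_one (by norm_num) (by norm_num)).mul_left C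
  refine (summable_nat_add_iff N).mp ?_
  apply Summable.of_nonneg_of_le (fun n => by positivity)
    (fun n => key (n + N) (Nat.le_add_left N n))
  exact (summable_nat_add_iff N).mpr hgeom

lemma Gamma_add_nat {c : ℝ} (hc : 0 < c) (m : ℕ) :
    Real.Gamma (c + m) = Real.Gamma c * ∏ i ∈ range m, (c + i) := by
  induction m with
  | zero => simp
  | succ m ih =>
    have hcm : (0:ℝ) < c + m := by positivity
    rw [show (c + ((m:ℕ)+1:ℕ) : ℝ) = (c + m) + 1 by push_cast; ring,
      Real.Gamma_add_one hcm.ne', ih, prod_range_succ]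
    ring

lemma prod_range_pos {c : ℝ} (hc : 0 < c) (m : ℕ) : 0 < ∏ i ∈ range m, (c + i) :=
  Finset.prod_pos (fun i _ => by positivity)

lemma key_sum (m : ℕ) : ∀ c : ℝ, 0 < c →
    ∑ i ∈ range (m+1), ((-1:ℝ)^i * (m.choose i) / (c+i))
      = (m ! : ℝ) / ∏ i ∈ range (m+1), (c+i) := by
  induction m with
  | zero => intro c hc; simp
  | succ m ih =>
    intro c hc
    have hc1 : (0:ℝ) < c + 1 := by linarith
    have hP : ∀ c' : ℝ, (0:ℝ) < c' → (∏ i ∈ range (m+1), (c'+i)) ≠ 0 :=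
      fun c' hc' => (prod_range_pos hc' (m+1)).ne'
    -- split off i = 0 and use Pascal
    have pascal : ∑ i ∈ range (m+2), ((-1:ℝ)^i * ((m+1).choose i) / (c+i))
        = (∑ i ∈ range (m+1), ((-1:ℝ)^i * (m.choose i) / (c+i)))
          - ∑ i ∈ range (m+1), ((-1:ℝ)^i * (m.choose i) / ((c+1)+i)) := by
      have e1 : ∀ i, ((m+1).choose (i+1) : ℝ) = (m.choose i : ℝ) + (m.choose (i+1) : ℝ) := by
        intro i; exact_mod_cast congrArg (Nat.cast (R:=ℝ)) (Nat.choose_succ_succ m i)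
      have e2 : ∑ i ∈ range (m+1), ((-1:ℝ)^(i+1) * ((m+1).choose (i+1)) / (c+(i+1:ℕ)))
          = (∑ i ∈ range (m+1), ((-1:ℝ)^(i+1) * (m.choose (i+1)) / (c+(i+1:ℕ))))
            - ∑ i ∈ range (m+1), ((-1:ℝ)^i * (m.choose i) / ((c+1)+i)) := by
        rw [← Finset.sum_sub_distrib]
        refine Finset.sum_congr rfl (fun i _ => ?_)
        rw [e1]
        push_cast
        have : c + (↑i + 1) ≠ 0 := by positivity
        field_simp
        ring
      have e3 : ∑ i ∈ range (m+2), ((-1:ℝ)^i * (m.choose i) / (c+i))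
          = (∑ i ∈ range (m+1), ((-1:ℝ)^(i+1) * (m.choose (i+1)) / (c+(i+1:ℕ)))) + 1/c := by
        rw [Finset.sum_range_succ' (fun i => ((-1:ℝ)^i * (m.choose i) / (c+(i:ℕ)))) (m+1)]
        norm_num
      have e4 : ∑ i ∈ range (m+2), ((-1:ℝ)^i * (m.choose i) / (c+i))
          = ∑ i ∈ range (m+1), ((-1:ℝ)^i * (m.choose i) / (c+i)) := by
        rw [Finset.sum_range_succ]
        simp [Nat.choose_succ_self]
      rw [Finset.sum_range_succ' (fun i => ((-1:ℝ)^i * ((m+1).choose i) / (c+(i:ℕ)))) (m+1)]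
      have e5 : ((-1:ℝ)^0 * (((m+1).choose 0:ℕ):ℝ) / (c+((0:ℕ):ℝ))) = 1/c := by norm_num
      rw [e5, e2]
      rw [e4] at e3
      linarith [e3]
    rw [pascal, ih c hc, ih (c+1) hc1]
    have p1 : (∏ i ∈ range (m+2), (c+i)) = (∏ i ∈ range (m+1), (c+i)) * (c+(m:ℝ)+1) := by
      rw [Finset.prod_range_succ]; push_cast; ring
    have p2 : (∏ i ∈ range (m+2), (c+i)) = (∏ i ∈ range (m+1), ((c+1)+i)) * c := by
      rw [Finset.prod_range_succ' (fun i => (c + (i:ℕ)))]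
      simp only [Nat.cast_add, Nat.cast_one, Nat.cast_zero, add_zero]
      rw [show (∏ i ∈ range (m+1), (c + ((i:ℝ) + 1))) = ∏ i ∈ range (m+1), ((c+1)+i) from
        Finset.prod_congr rfl (fun i _ => by ring)]
    have h1 := hP c hc
    have h2 := hP (c+1) hc1
    have h3 : (∏ i ∈ range (m+2), (c+i)) ≠ 0 := (prod_range_pos hc (m+2)).ne'
    rw [div_sub_div _ _ h1 h2, div_eq_div_iff (by exact mul_ne_zero h1 h2) h3]
    push_cast [Nat.factorial_succ]
    linear_combination ((m ! : ℝ) * (∏ i ∈ range (m+1), ((c+1)+(i:ℝ)))) * p1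
      - ((m ! : ℝ) * (∏ i ∈ range (m+1), (c+(i:ℝ)))) * p2

lemma beta_integral {c t : ℝ} (hc : 0 < c) (ht : 0 < t) (m : ℕ) :
    ∫ u in (0:ℝ)..t, (t - u)^m * u ^ (c - 1) =
      ((m ! : ℝ) * Real.Gamma c / Real.Gamma (c + m + 1)) * t ^ (c + m) := by
  have hint : ∀ i : ℕ, IntervalIntegrable (fun u : ℝ => u ^ (c - 1 + i)) volume 0 t :=
    fun i => intervalIntegral.intervalIntegrable_rpow' (by push_cast; linarith)
  have step1 : ∫ u in (0:ℝ)..t, (t - u)^m * u ^ (c - 1)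
      = ∑ i ∈ range (m+1), ((-1:ℝ)^i * (m.choose i) * t^(m-i)) * ∫ u in (0:ℝ)..t, u ^ (c - 1 + i) := by
    simp_rw [← intervalIntegral.integral_const_mul]
    rw [← intervalIntegral.integral_finset_sum (fun i _ =>
      ((hint i).const_mul _))]
    rw [intervalIntegral.integral_of_le ht.le, intervalIntegral.integral_of_le ht.le]
    refine setIntegral_congr_fun measurableSet_Ioc (fun u hu => ?_)
    have hu0 : 0 < u := hu.1
    rw [show t - u = -u + t by ring, add_pow]
    rw [Finset.sum_mul]
    refine Finset.sum_congr rfl (fun i hi => ?_)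
    have : u ^ (c - 1 + i) = u ^ (c-1) * u ^ (i:ℕ) := by
      rw [Real.rpow_add hu0, Real.rpow_natCast]
    rw [this, neg_pow]
    ring
  rw [step1]
  have step2 : ∀ i ∈ range (m+1),
      ((-1:ℝ)^i * (m.choose i) * t^(m-i)) * ∫ u in (0:ℝ)..t, u ^ (c - 1 + i)
      = t ^ (c + m) * ((-1:ℝ)^i * (m.choose i) / (c + i)) := by
    intro i hi
    have him : i ≤ m := Nat.lt_succ_iff.mp (Finset.mem_range.mp hi)
    have : ∫ u in (0:ℝ)..t, u ^ (c - 1 + i) = t ^ (c + i) / (c + i) := by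
      rw [integral_rpow (Or.inl (by push_cast; linarith))]
      rw [Real.zero_rpow (show (c - 1 + (i:ℝ) + 1) ≠ 0 by
        have := Nat.cast_nonneg (α:=ℝ) i; intro h; linarith)]
      rw [show c - 1 + i + 1 = c + i by ring]
      simp
    rw [this]
    have htmi : (t:ℝ)^(m-i) = t ^ ((m:ℝ) - i) := by
      rw [← Real.rpow_natCast t (m-i), Nat.cast_sub him]
    have hsplit : t ^ (c + (m:ℝ)) = t ^ ((m:ℝ) - i) * t ^ (c + i) := by
      rw [← Real.rpow_add ht]; ring_nf
    rw [htmi, hsplit]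
    ring
  rw [Finset.sum_congr rfl step2, ← Finset.mul_sum, key_sum m c hc]
  have hΓ : Real.Gamma (c + m + 1) = Real.Gamma c * ∏ i ∈ range (m+1), (c+i) := by
    rw [show c + (m:ℝ) + 1 = c + ((m+1:ℕ):ℝ) by push_cast; ring, Gamma_add_nat hc]
  rw [hΓ]
  have h1 : Real.Gamma c ≠ 0 := (Real.Gamma_pos_of_pos hc).ne'
  have h2 : (∏ i ∈ range (m+1), (c+i)) ≠ 0 := (prod_range_pos hc (m+1)).ne'
  field_simp

end Auxiliary

/-- The two-parameter Mittag-Leffler function `M_{a,b}(z) = ∑ zⁿ / Γ(an + b)`. -/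
noncomputable def mittagLeffler (a b z : ℝ) : ℝ :=
  ∑' n : ℕ, z ^ n / Real.Gamma (a * n + b)

lemma summable_ml {a b : ℝ} (ha : 0 < a) (hb : 0 < b) (z : ℝ) :
    Summable (fun n : ℕ => z ^ n / Real.Gamma (a * n + b)) := by
  rw [← summable_abs_iff]
  refine (summable_aux_s2 ha hb z).congr (fun n => ?_)
  have : 0 < Real.Gamma (a * n + b) := Real.Gamma_pos_of_pos (by positivity)
  rw [abs_div, abs_pow, abs_of_pos this]


lemma inner_integral {β w t : ℝ} (hβ0 : 0 < β) (ht : 0 < t) (m : ℕ) :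
    ∫ u in Set.Ioc (0:ℝ) t, (t - u)^m * (u ^ (β - 1) * mittagLeffler β β (w * u ^ β))
      = (m ! : ℝ) * t ^ (β + (m:ℝ)) * ∑' n : ℕ, (w * t ^ β)^n / Real.Gamma (β * n + β + m + 1) := by
  set g : ℕ → ℝ → ℝ := fun n u => (w^n / Real.Gamma (β*n+β)) * ((t-u)^m * u ^ (β*n+β-1)) with hg
  have hΓpos : ∀ n : ℕ, 0 < Real.Gamma (β*n+β) := fun n => Real.Gamma_pos_of_pos (by positivity)
  -- pointwise expansion on Ioc
  have hpt : ∀ u ∈ Set.Ioc (0:ℝ) t,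
      (t - u)^m * (u ^ (β - 1) * mittagLeffler β β (w * u ^ β)) = ∑' n, g n u := by
    intro u hu
    have hu0 : 0 < u := hu.1
    have e0 : mittagLeffler β β (w*u^β) = ∑' n:ℕ, (w*u^β)^n / Real.Gamma (β*n+β) := rfl
    rw [e0, ← tsum_mul_left, ← tsum_mul_left]
    refine tsum_congr (fun n => ?_)
    have h1 : (w * u ^ β)^n = w^n * u ^ (β * n) := by
      rw [mul_pow, ← Real.rpow_natCast (u ^ β) n, ← Real.rpow_mul hu0.le]
    have h2 : u ^ (β - 1) * u ^ (β * n) = u ^ (β*n+β-1) := by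
      rw [← Real.rpow_add hu0]; ring_nf
    rw [hg]
    simp only [h1]
    rw [show u ^ (β-1) * (w^n * u ^ (β*n) / Real.Gamma (β*n+β))
        = (w^n / Real.Gamma (β*n+β)) * (u ^ (β-1) * u ^ (β*n)) by ring, h2]
    ring
  rw [setIntegral_congr_fun measurableSet_Ioc hpt]
  -- integrability of each g n
  have hii : ∀ n : ℕ, IntervalIntegrable (fun u => (t-u)^m * u ^ (β*n+β-1)) volume 0 t := by
    intro n
    have hrp : IntervalIntegrable (fun u : ℝ => u ^ (β*n+β-1)) volume 0 t :=
      intervalIntegral.intervalIntegrable_rpow' (by have := Nat.cast_nonneg (α:=ℝ) n; nlinarith)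
    exact hrp.continuousOn_mul (by fun_prop)
  have hInt : ∀ n : ℕ, Integrable (g n) (volume.restrict (Set.Ioc 0 t)) := by
    intro n
    exact (((hii n).1).const_mul _)
  -- bound on integrals of norms
  have hrpint : ∀ n : ℕ, ∫ u in Set.Ioc (0:ℝ) t, u ^ (β*n+β-1) = t ^ (β*n+β) / (β*n+β) := by
    intro n
    have hnn := Nat.cast_nonneg (α:=ℝ) n
    rw [← intervalIntegral.integral_of_le ht.le, integral_rpow (Or.inl (by nlinarith))]
    rw [Real.zero_rpow (show (β*n+β-1+1) ≠ 0 by intro h; nlinarith)]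
    rw [show β*n+β-1+1 = β*n+β by ring]
    simp
  have hbound : ∀ n : ℕ, ∫ u in Set.Ioc (0:ℝ) t, ‖g n u‖
      ≤ (t^m * t ^ β / β) * ((|w| * t ^ β)^n / Real.Gamma (β*n+β)) := by
    intro n
    have hnn := Nat.cast_nonneg (α:=ℝ) n
    have hmono : ∀ u ∈ Set.Ioc (0:ℝ) t, ‖g n u‖
        ≤ (|w|^n / Real.Gamma (β*n+β)) * (t^m * u ^ (β*n+β-1)) := by
      intro u hu
      have hu0 : 0 < u := hu.1
      have hurp : (0:ℝ) ≤ u ^ (β*n+β-1) := (Real.rpow_pos_of_pos hu0 _).le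
      rw [hg, norm_mul, norm_mul]
      simp only [norm_div, norm_pow, Real.norm_eq_abs, abs_of_pos (hΓpos n)]
      rw [abs_of_nonneg hurp]
      have h1 : |t - u|^m ≤ t^m := by
        apply pow_le_pow_left₀ (abs_nonneg _)
        rw [abs_of_nonneg (by linarith [hu.2] : (0:ℝ) ≤ t - u)]
        linarith [hu0]
      exact mul_le_mul_of_nonneg_left (mul_le_mul_of_nonneg_right h1 hurp)
        (div_nonneg (by positivity) (hΓpos n).le)
    have hgint : Integrable (fun u => (|w|^n / Real.Gamma (β*n+β)) * (t^m * u ^ (β*n+β-1)))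
        (volume.restrict (Set.Ioc 0 t)) := by
      have : IntervalIntegrable (fun u : ℝ => u ^ (β*n+β-1)) volume 0 t :=
        intervalIntegral.intervalIntegrable_rpow' (by nlinarith)
      exact ((this.1).const_mul _).const_mul _
    calc ∫ u in Set.Ioc (0:ℝ) t, ‖g n u‖
        ≤ ∫ u in Set.Ioc (0:ℝ) t, (|w|^n / Real.Gamma (β*n+β)) * (t^m * u ^ (β*n+β-1)) := by
          refine integral_mono_of_nonneg (Filter.Eventually.of_forall (fun u => norm_nonneg _))
            hgint ?_
          filter_upwards [ae_restrict_mem measurableSet_Ioc] with u hu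
          exact hmono u hu
      _ = (|w|^n / Real.Gamma (β*n+β)) * (t^m * (t ^ (β*n+β) / (β*n+β))) := by
          rw [MeasureTheory.integral_const_mul, MeasureTheory.integral_const_mul, hrpint n]
      _ ≤ (t^m * t ^ β / β) * ((|w| * t ^ β)^n / Real.Gamma (β*n+β)) := by
          have e : t ^ (β*n+β) = (t ^ β)^n * t ^ β := by
            rw [← Real.rpow_natCast (t ^ β) n, ← Real.rpow_mul ht.le, ← Real.rpow_add ht]
          rw [e, mul_pow]
          have h1 : β ≤ β*n+β := by nlinarith
          calc |w|^n / Real.Gamma (β*n+β) * (t^m * ((t^β)^n * t^β / (β*n+β)))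
              = (|w|^n * (t^β)^n * t^β * t^m / Real.Gamma (β*n+β)) / (β*n+β) := by ring
            _ ≤ (|w|^n * (t^β)^n * t^β * t^m / Real.Gamma (β*n+β)) / β := by
                gcongr
            _ = t^m * t^β / β * (|w|^n * (t^β)^n / Real.Gamma (β*n+β)) := by
                field_simp
  -- summability of integral norms
  have hsum : Summable (fun n => ∫ u in Set.Ioc (0:ℝ) t, ‖g n u‖) := by
    apply Summable.of_nonneg_of_le
      (fun n => integral_nonneg (fun u => norm_nonneg _)) hbound
    have := (summable_aux_s2 hβ0 hβ0 (|w| * t ^ β)).mul_left (t^m * t ^ β / β)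
    refine this.congr (fun n => ?_)
    rw [abs_of_nonneg (by positivity : (0:ℝ) ≤ |w| * t ^ β)]
  -- swap
  rw [← MeasureTheory.integral_tsum_of_summable_integral_norm hInt hsum]
  -- evaluate each integral
  have heval : ∀ n : ℕ, ∫ u in Set.Ioc (0:ℝ) t, g n u
      = ((m ! : ℝ) * t ^ (β + (m:ℝ))) * ((w * t ^ β)^n / Real.Gamma (β * n + β + m + 1)) := by
    intro n
    have hc : (0:ℝ) < β*n+β := by positivity
    simp only [hg]
    rw [MeasureTheory.integral_const_mul]
    have : ∫ u in Set.Ioc (0:ℝ) t, (t-u)^m * u ^ (β*n+β-1)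
        = ((m ! : ℝ) * Real.Gamma (β*n+β) / Real.Gamma ((β*n+β) + m + 1)) * t ^ ((β*n+β) + m) := by
      rw [← intervalIntegral.integral_of_le ht.le]
      have := beta_integral hc ht m
      rw [show β*n+β-1 = (β*n+β) - 1 by ring] at *
      exact this
    rw [this]
    have e : t ^ (β*n+β + m) = (t ^ β)^n * t ^ (β + (m:ℝ)) := by
      rw [← Real.rpow_natCast (t ^ β) n, ← Real.rpow_mul ht.le, ← Real.rpow_add ht]
      ring_nf
    rw [e, mul_pow]
    have hΓ1 : Real.Gamma (β*n+β) ≠ 0 := (hΓpos n).ne'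
    have hΓ2 : Real.Gamma (β*n+β+m+1) ≠ 0 :=
      (Real.Gamma_pos_of_pos (by positivity : (0:ℝ) < β*n+β+m+1)).ne'
    rw [show β * n + β + m + 1 = β*n+β+m+1 from rfl]
    field_simp
  rw [tsum_congr heval, tsum_mul_left]

set_option maxHeartbeats 1000000 in
theorem integral_exp_mul_mittagLeffler
    (β ν w : ℝ) (hβ : β ∈ Set.Ioo (0 : ℝ) 1) (hν : 0 ≤ ν) (t : ℝ) (ht : 0 < t) :
    ∫ u in (0 : ℝ)..t, Real.exp (-ν * u) * u ^ (β - 1) * mittagLeffler β β (w * u ^ β) =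
      Real.exp (-ν * t) *
        ∑' m : ℕ, ν ^ m * t ^ (β + (m : ℝ)) * mittagLeffler β (β + m + 1) (w * t ^ β) := by
  obtain ⟨hβ0, hβ1⟩ := hβ
  have hΓpos : ∀ x : ℝ, 0 < x → 0 < Real.Gamma x := fun x hx => Real.Gamma_pos_of_pos hx
  set K : ℝ := ∑' n : ℕ, (|w| * t ^ β)^n / Real.Gamma (β * n + β) with hK
  have htβ : (0:ℝ) < t ^ β := Real.rpow_pos_of_pos ht β
  have hKsummable : Summable (fun n : ℕ => (|w| * t ^ β)^n / Real.Gamma (β * n + β)) := by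
    have := summable_aux_s2 hβ0 hβ0 (|w| * t ^ β)
    rwa [abs_of_nonneg (by positivity)] at this
  have hK0 : 0 ≤ K := tsum_nonneg (fun n => div_nonneg (by positivity) (hΓpos _ (by positivity)).le)
  -- bound on |ML| on Ioc
  have hMLbdd : ∀ u ∈ Set.Ioc (0:ℝ) t, |mittagLeffler β β (w * u ^ β)| ≤ K := by
    intro u hu
    have hu0 : 0 < u := hu.1
    have hsum2 : Summable (fun n : ℕ => |(w * u ^ β)^n / Real.Gamma (β * n + β)|) := by
      rw [summable_abs_iff]; exact summable_ml hβ0 hβ0 _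
    calc |mittagLeffler β β (w * u ^ β)|
        ≤ ∑' n : ℕ, |(w * u ^ β)^n / Real.Gamma (β * n + β)| := by
          have := norm_tsum_le_tsum_norm (f := fun n : ℕ => (w * u ^ β)^n / Real.Gamma (β * n + β))
            (by simpa only [Real.norm_eq_abs] using hsum2)
          simpa only [mittagLeffler, Real.norm_eq_abs] using this
      _ ≤ K := by
          refine Summable.tsum_le_tsum (fun n => ?_) hsum2 hKsummable
          have hΓ := hΓpos (β*n+β) (by positivity)
          rw [abs_div, abs_pow, abs_of_pos hΓ, abs_mul, abs_of_pos (Real.rpow_pos_of_pos hu0 β)]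
          gcongr
          exact hu.2
  -- continuity of ML composition on Ioc
  have hrpow : ∀ r : ℝ, ContinuousOn (fun u : ℝ => u ^ r) (Set.Ioc 0 t) := fun r u hu =>
    (Real.continuousAt_rpow_const u r (Or.inl (ne_of_gt hu.1))).continuousWithinAt
  have hMLc : ContinuousOn (fun u : ℝ => mittagLeffler β β (w * u ^ β)) (Set.Ioc 0 t) := by
    apply continuousOn_tsum (u := fun n : ℕ => (|w| * t ^ β)^n / Real.Gamma (β * n + β))
      (fun n => (((continuousOn_const.mul (hrpow β)).pow n).div_const _)) hKsummable
    intro n u hu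
    have hu0 : 0 < u := hu.1
    have hΓ := hΓpos (β*n+β) (by positivity)
    simp only [Pi.pow_apply, Pi.mul_apply]
    rw [Real.norm_eq_abs, abs_div, abs_pow, abs_of_pos hΓ, abs_mul,
      abs_of_pos (Real.rpow_pos_of_pos hu0 β)]
    gcongr
    exact hu.2
  -- the expansion of the exponential
  have exp_series : ∀ x : ℝ, Real.exp x = ∑' m : ℕ, x^m / m ! := fun x => by
    rw [Real.exp_eq_exp_ℝ, NormedSpace.exp_eq_tsum_div]
  set F : ℕ → ℝ → ℝ := fun m u => (Real.exp (-ν*t) * ν^m / m !) *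
    ((t-u)^m * (u ^ (β-1) * mittagLeffler β β (w * u ^ β))) with hF
  have hpt : ∀ u : ℝ, Real.exp (-ν * u) * u ^ (β - 1) * mittagLeffler β β (w * u ^ β)
      = ∑' m : ℕ, F m u := by
    intro u
    have hexp : Real.exp (-ν*u) = Real.exp (-ν*t) * ∑' m : ℕ, (ν*(t-u))^m / m ! := by
      rw [show -ν*u = -ν*t + ν*(t-u) by ring, Real.exp_add, exp_series (ν*(t-u))]
    have harr : Real.exp (-ν*t) * (∑' m : ℕ, (ν*(t-u))^m / m !) * u ^ (β-1) *
        mittagLeffler β β (w * u ^ β)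
        = (∑' m : ℕ, (ν*(t-u))^m / m !) *
          (Real.exp (-ν*t) * (u ^ (β-1) * mittagLeffler β β (w * u ^ β))) := by ring
    rw [hexp, harr, ← tsum_mul_right]
    refine tsum_congr (fun m => ?_)
    rw [hF, mul_pow]
    ring
  -- integrability of each F m
  have hrpint : IntegrableOn (fun u : ℝ => u ^ (β-1)) (Set.Ioc 0 t) volume :=
    (intervalIntegral.intervalIntegrable_rpow' (by linarith)).1
  have hGc : ∀ m : ℕ, ContinuousOn (F m) (Set.Ioc 0 t) := by
    intro m
    rw [hF]
    exact continuousOn_const.mul ((((continuous_const.sub continuous_id).pow m).continuousOn).mul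
      ((hrpow (β-1)).mul hMLc))
  have hfbd : ∀ m : ℕ, ∀ u ∈ Set.Ioc (0:ℝ) t,
      ‖F m u‖ ≤ ((Real.exp (-ν*t) * ν^m / m !) * t^m * K) * u ^ (β-1) := by
    intro m u hu
    have hcm : (0:ℝ) ≤ Real.exp (-ν*t) * ν^m / m ! := by positivity
    have hu0 : 0 < u := hu.1
    have h1 : |t-u|^m ≤ t^m := by
      apply pow_le_pow_left₀ (abs_nonneg _)
      rw [abs_of_nonneg (by linarith [hu.2] : (0:ℝ) ≤ t - u)]
      linarith
    have h2 := hMLbdd u hu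
    have hur : (0:ℝ) < u ^ (β-1) := Real.rpow_pos_of_pos hu0 _
    rw [Real.norm_eq_abs, hF]
    rw [abs_mul, abs_mul, abs_mul, abs_of_nonneg hcm, abs_of_pos hur, abs_pow]
    calc (Real.exp (-ν*t) * ν^m / m !) * (|t-u|^m * (u ^ (β-1) * |mittagLeffler β β (w*u^β)|))
        ≤ (Real.exp (-ν*t) * ν^m / m !) * (t^m * (u ^ (β-1) * K)) := by gcongr
      _ = ((Real.exp (-ν*t) * ν^m / m !) * t^m * K) * u ^ (β-1) := by ring
  have hFint : ∀ m : ℕ, Integrable (F m) (volume.restrict (Set.Ioc 0 t)) := by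
    intro m
    refine Integrable.mono' (hrpint.const_mul ((Real.exp (-ν*t) * ν^m / m !) * t^m * K))
      ((hGc m).aestronglyMeasurable measurableSet_Ioc) ?_
    filter_upwards [ae_restrict_mem measurableSet_Ioc] with u hu
    exact hfbd m u hu
  -- summability of norms of integrals
  have hrpval : ∫ u in Set.Ioc (0:ℝ) t, u ^ (β-1) = t ^ β / β := by
    rw [← intervalIntegral.integral_of_le ht.le, integral_rpow (Or.inl (by linarith))]
    rw [Real.zero_rpow (show β-1+1 ≠ 0 by intro h; linarith), show β-1+1 = β by ring]
    simp
  have hFnorm : ∀ m : ℕ, ∫ u in Set.Ioc (0:ℝ) t, ‖F m u‖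
      ≤ (Real.exp (-ν*t) * K * (t^β/β)) * ((ν*t)^m / m !) := by
    intro m
    calc ∫ u in Set.Ioc (0:ℝ) t, ‖F m u‖
        ≤ ∫ u in Set.Ioc (0:ℝ) t, ((Real.exp (-ν*t) * ν^m / m !) * t^m * K) * u ^ (β-1) := by
          refine integral_mono_of_nonneg (Filter.Eventually.of_forall (fun u => norm_nonneg _))
            (hrpint.const_mul _) ?_
          filter_upwards [ae_restrict_mem measurableSet_Ioc] with u hu
          exact hfbd m u hu
      _ = ((Real.exp (-ν*t) * ν^m / m !) * t^m * K) * (t ^ β / β) := by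
          rw [MeasureTheory.integral_const_mul, hrpval]
      _ = (Real.exp (-ν*t) * K * (t^β/β)) * ((ν*t)^m / m !) := by
          rw [mul_pow]; ring
  have hFsum : Summable (fun m : ℕ => ∫ u in Set.Ioc (0:ℝ) t, ‖F m u‖) := by
    apply Summable.of_nonneg_of_le (fun m => integral_nonneg (fun u => norm_nonneg _)) hFnorm
    exact (Real.summable_pow_div_factorial (ν*t)).mul_left _
  -- main computation
  rw [intervalIntegral.integral_of_le ht.le,
    setIntegral_congr_fun measurableSet_Ioc (fun u _ => hpt u),
    ← MeasureTheory.integral_tsum_of_summable_integral_norm hFint hFsum]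
  have heval : ∀ m : ℕ, (∫ u in Set.Ioc (0:ℝ) t, F m u)
      = Real.exp (-ν*t) * (ν ^ m * t ^ (β + (m:ℝ)) * mittagLeffler β (β + m + 1) (w * t ^ β)) := by
    intro m
    have hME : mittagLeffler β (β + m + 1) (w * t ^ β)
        = ∑' n : ℕ, (w * t ^ β)^n / Real.Gamma (β * n + β + m + 1) := by
      refine tsum_congr (fun n => ?_)
      congr 2
      ring
    simp only [hF]
    rw [MeasureTheory.integral_const_mul, inner_integral hβ0 ht m, hME]
    have hm : (m ! : ℝ) ≠ 0 := by positivity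
    field_simp
  rw [tsum_congr heval, tsum_mul_left]
end

section
/- Let Λ₀ > 0, α ∈ (0,1), γ > 0, ν > 0, β ∈ (0,1), and set w = (α−1)γ + ν^β with w ≠ 0. Define λ(t) = Λ₀ [ (ν^β − γ)/w + (αγ e^{−νt}/w) · Σ_{m=0}^∞ ν^m t^m M_{β, m+1}(w t^β) ], where M_{a,b}(z) = Σ_{n=0}^∞ z^n / Γ(an + b). Then for every t > 0, ∫₀^t λ(u) du = Λ₀ [ ((ν^β − γ)/w) t + (αγ e^{−νt}/w) · Σ_{m=0}^∞ Σ_{n=0}^∞ ν^{m+n} t^{m+n+1} M_{β, m+n+2}(w t^β) ]. -/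
open MeasureTheory Real Filter

set_option maxHeartbeats 800000

lemma gamma_lb (R x : ℝ) (hR : 1 ≤ R) (hx : 0 ≤ x) :
    Real.exp (-R) * R ^ x ≤ (x + 2) * (x + 1) * Real.Gamma (x + 1) := by
  have hR0 : (0:ℝ) < R := lt_of_lt_of_le one_pos hR
  set m : ℕ := ⌊x⌋₊ + 1 with hm
  have hxm : x ≤ (m : ℝ) := by
    have := Nat.lt_floor_add_one x
    push_cast [hm]; linarith
  have h1 : Real.exp (-R) * R ^ x ≤ (m.factorial : ℝ) := by
    have h := Real.pow_div_factorial_le_exp R hR0.le m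
    have hfac : (0:ℝ) < m.factorial := by positivity
    have hRm : R ^ m ≤ Real.exp R * m.factorial := by
      rw [div_le_iff₀ hfac] at h; linarith
    have hRx : R ^ x ≤ (R:ℝ) ^ m := by
      rw [← Real.rpow_natCast R m]
      exact Real.rpow_le_rpow_of_exponent_le hR hxm
    calc Real.exp (-R) * R ^ x ≤ Real.exp (-R) * (Real.exp R * m.factorial) := by
          apply mul_le_mul_of_nonneg_left (hRx.trans hRm) (Real.exp_nonneg _)
      _ = (m.factorial : ℝ) := by
          rw [← mul_assoc, ← Real.exp_add]; simp
  have h2 : (m.factorial : ℝ) ≤ Real.Gamma (x + 3) := by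
    rw [← Real.Gamma_nat_eq_factorial m]
    have e : ((m+1:ℕ):ℝ) = (m:ℝ) + 1 := by push_cast; ring
    have h2' : (2:ℝ) ≤ ((m+1:ℕ):ℝ) := by
      have : 2 ≤ m + 1 := by omega
      exact_mod_cast this
    have h3' : ((m+1:ℕ):ℝ) ≤ x + 3 := by
      have := Nat.floor_le hx
      push_cast [hm]; linarith
    rw [← e]
    exact Real.Gamma_strictMonoOn_Ici.monotoneOn h2'
      (by simp only [Set.mem_Ici]; linarith) h3'
  have h3 : Real.Gamma (x + 3) = (x + 2) * (x + 1) * Real.Gamma (x + 1) := by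
    have e1 : x + 3 = (x + 2) + 1 := by ring
    have e2 : x + 2 = (x + 1) + 1 := by ring
    rw [e1, Real.Gamma_add_one (by linarith), e2, Real.Gamma_add_one (by linarith)]
    ring
  linarith

lemma Gamma_arg_pos {β : ℝ} (hβ0 : 0 < β) (k m n : ℕ) : 0 < β * k + m + n + 1 := by
  have : (0:ℝ) ≤ β * k := by positivity
  have h1 : (0:ℝ) ≤ (m:ℝ) := Nat.cast_nonneg m
  have h2 : (0:ℝ) ≤ (n:ℝ) := Nat.cast_nonneg n
  linarith

lemma term_le (β a b c R : ℝ) (hβ0 : 0 < β) (hβ1 : β ≤ 1) (hR : 1 ≤ R)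
    (ha : 0 ≤ a) (hb : 0 ≤ b) (hc : 0 ≤ c)
    (haR : 8 * a ≤ R) (hbR : 8 * b ≤ R) (hcR : 8 * c ≤ R ^ β) (m n k : ℕ) :
    a ^ m * b ^ n * c ^ k / Real.Gamma (β * k + m + n + 1) ≤
      9 * Real.exp R * ((2⁻¹ : ℝ) ^ m * (2⁻¹ : ℝ) ^ n * (2⁻¹ : ℝ) ^ k) := by
  have hR0 : (0:ℝ) < R := lt_of_lt_of_le one_pos hR
  set x : ℝ := β * k + m + n with hxdef
  have hx : 0 ≤ x := by
    have := (Gamma_arg_pos hβ0 k m n (β := β))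
    simp only [hxdef]; nlinarith [ (Nat.cast_nonneg m : (0:ℝ) ≤ m), (Nat.cast_nonneg n : (0:ℝ) ≤ n), mul_nonneg hβ0.le (Nat.cast_nonneg k : (0:ℝ) ≤ (k:ℝ))]
  have hG : Real.exp (-R) * R ^ x / ((x+2)*(x+1)) ≤ Real.Gamma (x + 1) := by
    rw [div_le_iff₀ (by nlinarith)]
    calc Real.exp (-R) * R ^ x ≤ (x+2)*(x+1) * Real.Gamma (x+1) := gamma_lb R x hR hx
      _ = Real.Gamma (x+1) * ((x+2)*(x+1)) := by ring
  have hGpos : 0 < Real.Gamma (x + 1) := Real.Gamma_pos_of_pos (by linarith)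
  -- main bound
  have key : a ^ m * b ^ n * c ^ k / Real.Gamma (x + 1) ≤
      a ^ m * b ^ n * c ^ k * ((x+2)*(x+1)) * Real.exp R / R ^ x := by
    rw [div_le_div_iff₀ hGpos (by positivity)]
    have h1 : Real.exp (-R) * R ^ x / ((x+2)*(x+1)) * ((x+2)*(x+1)) = Real.exp (-R) * R ^ x := by
      field_simp
    have h2 : (a ^ m * b ^ n * c ^ k) * (Real.exp (-R) * R ^ x) ≤
        (a ^ m * b ^ n * c ^ k) * (((x+2)*(x+1)) * Real.Gamma (x+1)) := by
      apply mul_le_mul_of_nonneg_left _ (by positivity)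
      calc Real.exp (-R) * R ^ x ≤ (x+2)*(x+1) * Real.Gamma (x+1) := gamma_lb R x hR hx
        _ = _ := by ring
    have hexp : Real.exp (-R) = (Real.exp R)⁻¹ := Real.exp_neg R
    have hEpos : (0:ℝ) < Real.exp R := Real.exp_pos R
    have hprod : Real.exp R * Real.exp (-R) = 1 := by rw [← Real.exp_add]; simp
    calc a^m*b^n*c^k * R^x
        = Real.exp R * (a^m*b^n*c^k * (Real.exp (-R) * R^x)) := by
          rw [show Real.exp R * (a^m*b^n*c^k * (Real.exp (-R) * R^x)) =
            (Real.exp R * Real.exp (-R)) * (a^m*b^n*c^k * R^x) from by ring, hprod, one_mul]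
      _ ≤ Real.exp R * (a^m*b^n*c^k * ((x+2)*(x+1)*Real.Gamma (x+1))) :=
          mul_le_mul_of_nonneg_left h2 hEpos.le
      _ = a^m*b^n*c^k*((x+2)*(x+1))*Real.exp R*Real.Gamma (x+1) := by ring
  have hRb : (0:ℝ) < R ^ β := Real.rpow_pos_of_pos hR0 β
  have e1 : R ^ x = R ^ (β*(k:ℝ)) * R^((m:ℕ):ℝ) * R^((n:ℕ):ℝ) := by
    rw [hxdef, Real.rpow_add hR0, Real.rpow_add hR0]
  have e2 : R ^ (β*(k:ℝ)) = (R^β)^k := by rw [Real.rpow_mul hR0.le, Real.rpow_natCast]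
  have hRxeq : R ^ x = (R^β)^k * (R:ℝ)^m * (R:ℝ)^n := by
    rw [e1, e2, Real.rpow_natCast, Real.rpow_natCast]
  have hsplit : a^m*b^n*c^k / R^x = (a/R)^m * (b/R)^n * (c/(R^β))^k := by
    rw [hRxeq, div_pow, div_pow, div_pow]
    have p1 : ((R:ℝ)^β)^k ≠ 0 := by positivity
    have p2 : ((R:ℝ))^m ≠ 0 := by positivity
    have p3 : ((R:ℝ))^n ≠ 0 := by positivity
    field_simp
  have hpoly : (x+2)*(x+1) ≤ 9 * ((4:ℝ)^m * 4^n * 4^k) := by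
    have hm1 : (m:ℝ) + 1 ≤ 2^m := by exact_mod_cast (Nat.lt_two_pow_self : m < 2^m)
    have hn1 : (n:ℝ) + 1 ≤ 2^n := by exact_mod_cast (Nat.lt_two_pow_self : n < 2^n)
    have hk1 : (k:ℝ) + 1 ≤ 2^k := by exact_mod_cast (Nat.lt_two_pow_self : k < 2^k)
    have h2m : (1:ℝ) ≤ 2^m := one_le_pow₀ one_le_two
    have h2n : (1:ℝ) ≤ 2^n := one_le_pow₀ one_le_two
    have h2k : (1:ℝ) ≤ 2^k := one_le_pow₀ one_le_two
    have hbk : β * (k:ℝ) ≤ (k:ℝ) := by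
      have : (0:ℝ) ≤ (k:ℝ) := Nat.cast_nonneg k
      nlinarith
    set P : ℝ := 2^m * 2^n * 2^k with hP
    have pm : (2:ℝ)^m ≤ P := by
      have c1 : (1:ℝ) ≤ 2^n * 2^k := by rw [← pow_add]; exact one_le_pow₀ one_le_two
      calc (2:ℝ)^m = 2^m * 1 := (mul_one _).symm
        _ ≤ 2^m * (2^n * 2^k) := by
            exact mul_le_mul_of_nonneg_left c1 (by positivity)
        _ = P := by rw [hP]; ring
    have pn : (2:ℝ)^n ≤ P := by
      have c1 : (1:ℝ) ≤ 2^m * 2^k := by rw [← pow_add]; exact one_le_pow₀ one_le_two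
      calc (2:ℝ)^n = 2^n * 1 := (mul_one _).symm
        _ ≤ 2^n * (2^m * 2^k) := by
            exact mul_le_mul_of_nonneg_left c1 (by positivity)
        _ = P := by rw [hP]; ring
    have pk : (2:ℝ)^k ≤ P := by
      have c1 : (1:ℝ) ≤ 2^m * 2^n := by rw [← pow_add]; exact one_le_pow₀ one_le_two
      calc (2:ℝ)^k = 2^k * 1 := (mul_one _).symm
        _ ≤ 2^k * (2^m * 2^n) := by
            exact mul_le_mul_of_nonneg_left c1 (by positivity)
        _ = P := by rw [hP]; ring
    have hx2 : x + 2 ≤ 3 * P := by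
      have hxle : x + 2 ≤ ((m:ℝ)+1) + ((n:ℝ)+1) + ((k:ℝ)+1) := by
        simp only [hxdef]; linarith
      linarith
    have hx1 : 0 ≤ x + 1 := by linarith
    have hsq : (x+2)*(x+1) ≤ (3*P)*(3*P) := by nlinarith
    have h4eq : ∀ i:ℕ, ((2:ℝ)^i)*((2:ℝ)^i) = 4^i := by
      intro i
      rw [← pow_add, show (4:ℝ) = 2^2 from by norm_num, ← pow_mul]
      ring_nf
    calc (x+2)*(x+1) ≤ (3*P)*(3*P) := hsq
      _ = 9 * ((2^m*2^m) * (2^n*2^n) * (2^k*2^k)) := by rw [hP]; ring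
      _ = 9 * ((4:ℝ)^m * 4^n * 4^k) := by rw [h4eq m, h4eq n, h4eq k]
  have h4 : ∀ (y z : ℝ) (i : ℕ), (4:ℝ)^i * (y/z)^i = (4*y/z)^i := by
    intro y z i; rw [← mul_pow, mul_div_assoc]
  have h4a : 4*a/R ≤ 2⁻¹ := by rw [div_le_iff₀ hR0]; linarith
  have h4b : 4*b/R ≤ 2⁻¹ := by rw [div_le_iff₀ hR0]; linarith
  have h4c : 4*c/(R^β) ≤ 2⁻¹ := by rw [div_le_iff₀ hRb]; linarith
  calc a ^ m * b ^ n * c ^ k / Real.Gamma (β * k + m + n + 1)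
      = a ^ m * b ^ n * c ^ k / Real.Gamma (x + 1) := by rw [hxdef]
    _ ≤ a^m*b^n*c^k * ((x+2)*(x+1)) * Real.exp R / R^x := key
    _ = Real.exp R * ((x+2)*(x+1)) * (a^m*b^n*c^k / R^x) := by ring
    _ = Real.exp R * ((x+2)*(x+1)) * ((a/R)^m * (b/R)^n * (c/(R^β))^k) := by rw [hsplit]
    _ ≤ Real.exp R * (9 * ((4:ℝ)^m * 4^n * 4^k)) * ((a/R)^m * (b/R)^n * (c/(R^β))^k) := by
        apply mul_le_mul_of_nonneg_right _ (by positivity)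
        exact mul_le_mul_of_nonneg_left hpoly (Real.exp_nonneg R)
    _ = 9 * Real.exp R * ((4*a/R)^m * (4*b/R)^n * (4*c/(R^β))^k) := by
        rw [← h4 a R m, ← h4 b R n, ← h4 c (R^β) k]; ring
    _ ≤ 9 * Real.exp R * ((2⁻¹:ℝ) ^ m * (2⁻¹:ℝ) ^ n * (2⁻¹:ℝ) ^ k) := by
        apply mul_le_mul_of_nonneg_left _ (by positivity)
        have n1 : (0:ℝ) ≤ 4*a/R := by positivity
        have n2 : (0:ℝ) ≤ 4*b/R := by positivity
        have n3 : (0:ℝ) ≤ 4*c/(R^β) := by positivity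
        gcongr <;> assumption

lemma summable3 (β a b c : ℝ) (hβ0 : 0 < β) (hβ1 : β ≤ 1)
    (ha : 0 ≤ a) (hb : 0 ≤ b) (hc : 0 ≤ c) :
    Summable (fun q : ℕ × ℕ × ℕ =>
      a ^ q.1 * b ^ q.2.1 * c ^ q.2.2 / Real.Gamma (β * q.2.2 + q.1 + q.2.1 + 1)) := by
  set S : ℝ := 8*a + 8*b + 8*c + 2 with hS
  have hS2 : (2:ℝ) ≤ S := by simp only [hS]; linarith
  set R : ℝ := S + S ^ (β⁻¹) with hRdef
  have hSb : (0:ℝ) ≤ S ^ (β⁻¹) := Real.rpow_nonneg (by linarith) _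
  have hRS : S ≤ R := by simp only [hRdef]; linarith
  have hR1 : 1 ≤ R := by linarith
  have haR : 8*a ≤ R := by simp only [hS] at hRS ⊢; linarith
  have hbR : 8*b ≤ R := by simp only [hS] at hRS ⊢; linarith
  have hcR : 8*c ≤ R ^ β := by
    have h1 : S ^ (β⁻¹) ≤ R := by simp only [hRdef]; linarith
    have h2 : (S ^ (β⁻¹)) ^ β ≤ R ^ β :=
      Real.rpow_le_rpow (Real.rpow_nonneg (by linarith) _) h1 hβ0.le
    have h3 : (S ^ (β⁻¹)) ^ β = S := by
      rw [← Real.rpow_mul (by linarith : (0:ℝ) ≤ S), inv_mul_cancel₀ (ne_of_gt hβ0),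
        Real.rpow_one]
    rw [h3] at h2
    simp only [hS] at h2 ⊢; linarith
  have hsum : Summable (fun q : ℕ × ℕ × ℕ =>
      9 * Real.exp R * ((2⁻¹:ℝ) ^ q.1 * (2⁻¹:ℝ) ^ q.2.1 * (2⁻¹:ℝ) ^ q.2.2)) := by
    have hg : Summable (fun i : ℕ => (2⁻¹:ℝ)^i) :=
      summable_geometric_of_lt_one (by norm_num) (by norm_num)
    have h23 : Summable (fun q : ℕ × ℕ => (2⁻¹:ℝ)^q.1 * (2⁻¹:ℝ)^q.2) :=
      hg.mul_of_nonneg hg (fun i => by positivity) (fun i => by positivity)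
    have h123 : Summable (fun q : ℕ × ℕ × ℕ =>
        (2⁻¹:ℝ)^q.1 * ((2⁻¹:ℝ)^q.2.1 * (2⁻¹:ℝ)^q.2.2)) :=
      hg.mul_of_nonneg h23 (fun i => by positivity) (fun i => by positivity)
    exact (h123.mul_left (9 * Real.exp R)).congr (fun q => by ring)
  apply Summable.of_nonneg_of_le _ _ hsum
  · intro q
    have : 0 < Real.Gamma (β * q.2.2 + q.1 + q.2.1 + 1) :=
      Real.Gamma_pos_of_pos (Gamma_arg_pos hβ0 q.2.2 q.1 q.2.1)
    positivity
  · intro q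
    exact term_le β a b c R hβ0 hβ1 hR1 ha hb hc haR hbR hcR q.1 q.2.1 q.2.2

lemma summable2 (β a c : ℝ) (hβ0 : 0 < β) (hβ1 : β ≤ 1)
    (ha : 0 ≤ a) (hc : 0 ≤ c) :
    Summable (fun q : ℕ × ℕ =>
      a ^ q.1 * c ^ q.2 / Real.Gamma (β * q.2 + q.1 + 1)) := by
  have hinj : Function.Injective (fun q : ℕ × ℕ => ((q.1, ((0:ℕ), q.2)) : ℕ × ℕ × ℕ)) := by
    intro q q' h
    simp only [Prod.ext_iff] at h
    exact Prod.ext h.1 h.2.2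
  have h := (summable3 β a 0 c hβ0 hβ1 ha le_rfl hc).comp_injective hinj
  apply h.congr
  intro q
  simp

noncomputable def Fterm (ν w β : ℝ) (q : ℕ × ℕ) (t : ℝ) : ℝ :=
  ν ^ q.1 * w ^ q.2 / Real.Gamma (β * q.2 + q.1 + 1) * t ^ ((q.1 : ℝ) + β * q.2)

noncomputable def Gterm (ν w β : ℝ) (q : ℕ × ℕ) (t : ℝ) : ℝ :=
  ((q.1 : ℝ) + 1) * ν ^ q.1 * w ^ q.2 / Real.Gamma (β * q.2 + q.1 + 2) *
    t ^ ((q.1 : ℝ) + 1 + β * q.2)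

noncomputable def Gterm' (ν w β : ℝ) (q : ℕ × ℕ) (t : ℝ) : ℝ :=
  ((q.1 : ℝ) + 1) * ν ^ q.1 * w ^ q.2 / Real.Gamma (β * q.2 + q.1 + 2) *
    (((q.1 : ℝ) + 1 + β * q.2) * t ^ ((q.1 : ℝ) + β * q.2))

section params
variable {ν w β : ℝ} (hν : 0 < ν) (hβ0 : 0 < β) (hβ1 : β ≤ 1)

include hβ0 in
lemma gamma_pos1 (q : ℕ × ℕ) : 0 < Real.Gamma (β * q.2 + q.1 + 1) :=
  Real.Gamma_pos_of_pos (by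
    have h1 : (0:ℝ) ≤ β * q.2 := by positivity
    have h2 : (0:ℝ) ≤ (q.1:ℝ) := Nat.cast_nonneg _
    linarith)

include hβ0 in
lemma gamma_pos2 (q : ℕ × ℕ) : 0 < Real.Gamma (β * q.2 + q.1 + 2) :=
  Real.Gamma_pos_of_pos (by
    have h1 : (0:ℝ) ≤ β * q.2 := by positivity
    have h2 : (0:ℝ) ≤ (q.1:ℝ) := Nat.cast_nonneg _
    linarith)

lemma gamma_step {y : ℝ} (hy : 1 ≤ y) : Real.Gamma y ≤ Real.Gamma (y + 1) := by
  rw [Real.Gamma_add_one (by linarith)]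
  have := Real.Gamma_pos_of_pos (by linarith : (0:ℝ) < y)
  nlinarith

lemma exp_split {M : ℝ} (hM : 0 < M) (i : ℕ) (k : ℕ) :
    M ^ ((i : ℝ) + β * k) = M ^ i * (M ^ β) ^ k := by
  rw [Real.rpow_add hM, Real.rpow_natCast,
    show β * (k:ℝ) = β * (k:ℝ) from rfl, ← Real.rpow_natCast (M ^ β) k,
    ← Real.rpow_mul hM.le]

lemma rpow_le_of_mem {M x : ℝ} (hM : 1 ≤ M) (hx : x ∈ Set.Icc 0 M) {c : ℝ} (hc : 0 ≤ c) :
    x ^ c ≤ M ^ c := by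
  rcases hx with ⟨h0, h1⟩
  exact Real.rpow_le_rpow h0 h1 hc

include hν hβ0 in
lemma Fterm_bound {M x : ℝ} (hM : 1 ≤ M) (hx : x ∈ Set.Icc 0 M) (q : ℕ × ℕ) :
    |Fterm ν w β q x| ≤
      (ν * M) ^ q.1 * (|w| * M ^ β) ^ q.2 / Real.Gamma (β * q.2 + q.1 + 1) := by
  have hM0 : (0:ℝ) < M := by linarith
  have hG := gamma_pos1 hβ0 q
  have hc : (0:ℝ) ≤ (q.1:ℝ) + β * q.2 := by positivity
  have hxc : |x ^ ((q.1:ℝ) + β * q.2)| ≤ M ^ q.1 * (M ^ β) ^ q.2 := by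
    rw [abs_of_nonneg (Real.rpow_nonneg hx.1 _), ← exp_split hM0 q.1 q.2]
    exact rpow_le_of_mem hM hx hc
  calc |Fterm ν w β q x|
      = |ν ^ q.1 * w ^ q.2 / Real.Gamma (β * q.2 + q.1 + 1)| * |x ^ ((q.1:ℝ) + β * q.2)| := by
        rw [Fterm, abs_mul]
    _ ≤ |ν ^ q.1 * w ^ q.2 / Real.Gamma (β * q.2 + q.1 + 1)| * (M ^ q.1 * (M ^ β) ^ q.2) := by
        apply mul_le_mul_of_nonneg_left hxc (abs_nonneg _)
    _ = (ν ^ q.1 * |w| ^ q.2 / Real.Gamma (β * q.2 + q.1 + 1)) * (M ^ q.1 * (M ^ β) ^ q.2) := by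
        rw [abs_div, abs_mul, abs_pow, abs_pow, abs_of_pos hν, abs_of_pos hG]
    _ = (ν * M) ^ q.1 * (|w| * M ^ β) ^ q.2 / Real.Gamma (β * q.2 + q.1 + 1) := by
        rw [mul_pow, mul_pow]; ring

include hν hβ0 hβ1 in
lemma Fbound_summable {M : ℝ} (hM : 1 ≤ M) :
    Summable (fun q : ℕ × ℕ =>
      (ν * M) ^ q.1 * (|w| * M ^ β) ^ q.2 / Real.Gamma (β * q.2 + q.1 + 1)) :=
  summable2 β (ν * M) (|w| * M ^ β) hβ0 hβ1 (by positivity) (by positivity)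

include hν hβ0 hβ1 in
lemma Fterm_summable {M x : ℝ} (hM : 1 ≤ M) (hx : x ∈ Set.Icc 0 M) :
    Summable (fun q : ℕ × ℕ => Fterm ν w β q x) := by
  apply Summable.of_norm
  apply Summable.of_nonneg_of_le (fun q => norm_nonneg _)
    (fun q => by simpa [Real.norm_eq_abs] using Fterm_bound hν hβ0 hM hx q)
    (Fbound_summable hν hβ0 hβ1 hM)

lemma rpow_contOn {c : ℝ} (hc : 0 ≤ c) : ContinuousOn (fun x : ℝ => x ^ c) (Set.Icc 0 1000000) :=
  fun x _ => (Real.continuousAt_rpow_const x c (Or.inr hc)).continuousWithinAt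

include hν hβ0 hβ1 in
lemma FcontOn {M : ℝ} (hM : 1 ≤ M) :
    ContinuousOn (fun x => ∑' q : ℕ × ℕ, Fterm ν w β q x) (Set.Icc 0 M) := by
  apply continuousOn_tsum (u := fun q : ℕ × ℕ =>
      (ν * M) ^ q.1 * (|w| * M ^ β) ^ q.2 / Real.Gamma (β * q.2 + q.1 + 1))
  · intro q
    apply ContinuousOn.mul continuousOn_const
    intro x _
    exact (Real.continuousAt_rpow_const x _ (Or.inr (by positivity))).continuousWithinAt
  · exact Fbound_summable hν hβ0 hβ1 hM
  · intro q x hx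
    simpa [Real.norm_eq_abs] using Fterm_bound hν hβ0 hM hx q

include hν hβ0 in
lemma Gterm_bound {M x : ℝ} (hM : 1 ≤ M) (hx : x ∈ Set.Icc 0 M) (q : ℕ × ℕ) :
    |Gterm ν w β q x| ≤
      ((q.1:ℝ) + 1) * ((ν * M) ^ q.1 * (|w| * M ^ β) ^ q.2) * M /
        Real.Gamma (β * q.2 + q.1 + 2) := by
  have hM0 : (0:ℝ) < M := by linarith
  have hG := gamma_pos2 hβ0 q
  have hc : (0:ℝ) ≤ (q.1:ℝ) + 1 + β * q.2 := by positivity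
  have hexp : M ^ ((q.1:ℝ) + 1 + β * q.2) = M ^ q.1 * (M ^ β) ^ q.2 * M := by
    rw [show (q.1:ℝ) + 1 + β * q.2 = ((q.1:ℝ) + β * q.2) + 1 from by ring,
      Real.rpow_add hM0, Real.rpow_one, exp_split hM0 q.1 q.2]
  have hxc : |x ^ ((q.1:ℝ) + 1 + β * q.2)| ≤ M ^ q.1 * (M ^ β) ^ q.2 * M := by
    rw [abs_of_nonneg (Real.rpow_nonneg hx.1 _), ← hexp]
    exact rpow_le_of_mem hM hx hc
  calc |Gterm ν w β q x|
      = |((q.1:ℝ) + 1) * ν ^ q.1 * w ^ q.2 / Real.Gamma (β * q.2 + q.1 + 2)| *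
          |x ^ ((q.1:ℝ) + 1 + β * q.2)| := by rw [Gterm, abs_mul]
    _ ≤ |((q.1:ℝ) + 1) * ν ^ q.1 * w ^ q.2 / Real.Gamma (β * q.2 + q.1 + 2)| *
          (M ^ q.1 * (M ^ β) ^ q.2 * M) := mul_le_mul_of_nonneg_left hxc (abs_nonneg _)
    _ = (((q.1:ℝ) + 1) * ν ^ q.1 * |w| ^ q.2 / Real.Gamma (β * q.2 + q.1 + 2)) *
          (M ^ q.1 * (M ^ β) ^ q.2 * M) := by
        rw [abs_div, abs_mul, abs_mul, abs_pow, abs_pow, abs_of_pos hν, abs_of_pos hG,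
          abs_of_nonneg (by positivity : (0:ℝ) ≤ (q.1:ℝ) + 1)]
    _ = ((q.1:ℝ) + 1) * ((ν * M) ^ q.1 * (|w| * M ^ β) ^ q.2) * M /
          Real.Gamma (β * q.2 + q.1 + 2) := by rw [mul_pow, mul_pow]; ring

include hν hβ0 hβ1 in
lemma Gbound_summable {M : ℝ} (hM : 1 ≤ M) :
    Summable (fun q : ℕ × ℕ =>
      ((q.1:ℝ) + 1) * ((ν * M) ^ q.1 * (|w| * M ^ β) ^ q.2) * M /
        Real.Gamma (β * q.2 + q.1 + 2)) := by
  have hs := summable2 β (2 * (ν * M)) (|w| * M ^ β) hβ0 hβ1 (by positivity) (by positivity)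
  apply Summable.of_nonneg_of_le _ _ (hs.mul_left M)
  · intro q
    have := gamma_pos2 hβ0 q
    positivity
  · intro q
    have hG2 := gamma_pos2 hβ0 q
    have hG1 := gamma_pos1 hβ0 q
    have hstep : Real.Gamma (β * q.2 + q.1 + 1) ≤ Real.Gamma (β * q.2 + q.1 + 2) := by
      have h := gamma_step (y := β * q.2 + q.1 + 1) (by
        have h1 : (0:ℝ) ≤ β * q.2 := by positivity
        have h2 : (0:ℝ) ≤ (q.1:ℝ) := Nat.cast_nonneg _
        linarith)
      calc Real.Gamma (β * q.2 + q.1 + 1) ≤ Real.Gamma (β * q.2 + q.1 + 1 + 1) := h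
        _ = Real.Gamma (β * q.2 + q.1 + 2) := by ring_nf
    have hp2 : ((q.1:ℝ) + 1) ≤ 2 ^ q.1 := by
      exact_mod_cast (Nat.lt_two_pow_self : q.1 < 2 ^ q.1)
    have hnum : ((q.1:ℝ) + 1) * ((ν * M) ^ q.1 * (|w| * M ^ β) ^ q.2) * M ≤
        M * ((2 * (ν * M)) ^ q.1 * (|w| * M ^ β) ^ q.2) := by
      have h1 : ((q.1:ℝ) + 1) * (ν * M) ^ q.1 ≤ (2 * (ν * M)) ^ q.1 := by
        rw [mul_pow 2 (ν * M)]
        exact mul_le_mul_of_nonneg_right hp2 (by positivity)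
      calc ((q.1:ℝ) + 1) * ((ν * M) ^ q.1 * (|w| * M ^ β) ^ q.2) * M
          = (((q.1:ℝ) + 1) * (ν * M) ^ q.1) * (|w| * M ^ β) ^ q.2 * M := by ring
        _ ≤ (2 * (ν * M)) ^ q.1 * (|w| * M ^ β) ^ q.2 * M := by
            apply mul_le_mul_of_nonneg_right _ (by linarith)
            exact mul_le_mul_of_nonneg_right h1 (by positivity)
        _ = M * ((2 * (ν * M)) ^ q.1 * (|w| * M ^ β) ^ q.2) := by ring
    calc ((q.1:ℝ) + 1) * ((ν * M) ^ q.1 * (|w| * M ^ β) ^ q.2) * M /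
          Real.Gamma (β * q.2 + q.1 + 2)
        ≤ M * ((2 * (ν * M)) ^ q.1 * (|w| * M ^ β) ^ q.2) / Real.Gamma (β * q.2 + q.1 + 2) := by
          gcongr
      _ ≤ M * ((2 * (ν * M)) ^ q.1 * (|w| * M ^ β) ^ q.2) / Real.Gamma (β * q.2 + q.1 + 1) := by
          apply div_le_div_of_nonneg_left (by positivity) hG1 hstep
      _ = M * ((2 * (ν * M)) ^ q.1 * (|w| * M ^ β) ^ q.2 / Real.Gamma (β * q.2 + q.1 + 1)) := by
          ring

include hν hβ0 hβ1 in
lemma Gterm_summable {M x : ℝ} (hM : 1 ≤ M) (hx : x ∈ Set.Icc 0 M) :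
    Summable (fun q : ℕ × ℕ => Gterm ν w β q x) := by
  apply Summable.of_norm
  apply Summable.of_nonneg_of_le (fun q => norm_nonneg _)
    (fun q => by simpa [Real.norm_eq_abs] using Gterm_bound hν hβ0 hM hx q)
    (Gbound_summable hν hβ0 hβ1 hM)

include hν hβ0 hβ1 in
lemma GcontOn {M : ℝ} (hM : 1 ≤ M) :
    ContinuousOn (fun x => ∑' q : ℕ × ℕ, Gterm ν w β q x) (Set.Icc 0 M) := by
  apply continuousOn_tsum (u := fun q : ℕ × ℕ =>
      ((q.1:ℝ) + 1) * ((ν * M) ^ q.1 * (|w| * M ^ β) ^ q.2) * M /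
        Real.Gamma (β * q.2 + q.1 + 2))
  · intro q
    apply ContinuousOn.mul continuousOn_const
    intro x _
    exact (Real.continuousAt_rpow_const x _ (Or.inr (by positivity))).continuousWithinAt
  · exact Gbound_summable hν hβ0 hβ1 hM
  · intro q x hx
    simpa [Real.norm_eq_abs] using Gterm_bound hν hβ0 hM hx q

include hβ0 in
lemma Gsum_zero : ∑' q : ℕ × ℕ, Gterm ν w β q 0 = 0 := by
  have h : ∀ q : ℕ × ℕ, Gterm ν w β q 0 = 0 := by
    intro q
    have : (0:ℝ) ^ ((q.1:ℝ) + 1 + β * q.2) = 0 := by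
      apply Real.zero_rpow
      have h1 : (0:ℝ) ≤ β * q.2 := by positivity
      positivity
    rw [Gterm, this, mul_zero]
  simp [h]

include hβ0 in
lemma Gterm_hasDeriv (q : ℕ × ℕ) (y : ℝ) :
    HasDerivAt (fun x => Gterm ν w β q x) (Gterm' ν w β q y) y := by
  have he : (1:ℝ) ≤ (q.1:ℝ) + 1 + β * q.2 := by
    have h1 : (0:ℝ) ≤ β * q.2 := by positivity
    have h2 : (0:ℝ) ≤ (q.1:ℝ) := Nat.cast_nonneg _
    linarith
  have h := Real.hasDerivAt_rpow_const (x := y) (p := (q.1:ℝ) + 1 + β * q.2) (Or.inr he)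
  have h2 := h.const_mul (((q.1:ℝ) + 1) * ν ^ q.1 * w ^ q.2 / Real.Gamma (β * q.2 + q.1 + 2))
  convert h2 using 1
  · rfl
  · rfl
  · rfl
  rw [Gterm', show (q.1:ℝ) + 1 + β * q.2 - 1 = (q.1:ℝ) + β * q.2 from by ring]

include hν hβ0 in
lemma Gderiv_bound {M y : ℝ} (hM : 1 ≤ M) (hy : y ∈ Set.Icc 0 M) (q : ℕ × ℕ) :
    |Gterm' ν w β q y| ≤
      (((q.1:ℝ) + 1) * ((q.1:ℝ) + 1 + β * q.2)) * ((ν * M) ^ q.1 * (|w| * M ^ β) ^ q.2) /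
        Real.Gamma (β * q.2 + q.1 + 2) := by
  have hM0 : (0:ℝ) < M := by linarith
  have hG := gamma_pos2 hβ0 q
  have hb : (0:ℝ) ≤ β * q.2 := by positivity
  have hq1 : (0:ℝ) ≤ (q.1:ℝ) := Nat.cast_nonneg _
  have hxc : |y ^ ((q.1:ℝ) + β * q.2)| ≤ M ^ q.1 * (M ^ β) ^ q.2 := by
    rw [abs_of_nonneg (Real.rpow_nonneg hy.1 _), ← exp_split hM0 q.1 q.2]
    exact rpow_le_of_mem hM hy (by positivity)
  calc |Gterm' ν w β q y|
      = |((q.1:ℝ) + 1) * ν ^ q.1 * w ^ q.2 / Real.Gamma (β * q.2 + q.1 + 2)| *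
          (((q.1:ℝ) + 1 + β * q.2) * |y ^ ((q.1:ℝ) + β * q.2)|) := by
        rw [Gterm', abs_mul, abs_mul, abs_of_nonneg (by linarith : (0:ℝ) ≤ (q.1:ℝ) + 1 + β * q.2)]
    _ ≤ |((q.1:ℝ) + 1) * ν ^ q.1 * w ^ q.2 / Real.Gamma (β * q.2 + q.1 + 2)| *
          (((q.1:ℝ) + 1 + β * q.2) * (M ^ q.1 * (M ^ β) ^ q.2)) := by
        apply mul_le_mul_of_nonneg_left _ (abs_nonneg _)
        exact mul_le_mul_of_nonneg_left hxc (by linarith)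
    _ = (((q.1:ℝ) + 1) * ν ^ q.1 * |w| ^ q.2 / Real.Gamma (β * q.2 + q.1 + 2)) *
          (((q.1:ℝ) + 1 + β * q.2) * (M ^ q.1 * (M ^ β) ^ q.2)) := by
        rw [abs_div, abs_mul, abs_mul, abs_pow, abs_pow, abs_of_pos hν, abs_of_pos hG,
          abs_of_nonneg (by linarith : (0:ℝ) ≤ (q.1:ℝ) + 1)]
    _ = (((q.1:ℝ) + 1) * ((q.1:ℝ) + 1 + β * q.2)) * ((ν * M) ^ q.1 * (|w| * M ^ β) ^ q.2) /
          Real.Gamma (β * q.2 + q.1 + 2) := by rw [mul_pow, mul_pow]; ring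

include hν hβ0 hβ1 in
lemma Gderiv_bound_summable {M : ℝ} (hM : 1 ≤ M) :
    Summable (fun q : ℕ × ℕ =>
      (((q.1:ℝ) + 1) * ((q.1:ℝ) + 1 + β * q.2)) * ((ν * M) ^ q.1 * (|w| * M ^ β) ^ q.2) /
        Real.Gamma (β * q.2 + q.1 + 2)) := by
  have hs := summable2 β (4 * (ν * M)) (2 * (|w| * M ^ β)) hβ0 hβ1 (by positivity) (by positivity)
  apply Summable.of_nonneg_of_le _ _ hs
  · intro q
    have hG := gamma_pos2 hβ0 q
    have hb : (0:ℝ) ≤ β * q.2 := by positivity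
    have hq1 : (0:ℝ) ≤ (q.1:ℝ) := Nat.cast_nonneg _
    have h1 : (0:ℝ) ≤ ((q.1:ℝ) + 1) * ((q.1:ℝ) + 1 + β * q.2) := by positivity
    positivity
  · intro q
    have hG2 := gamma_pos2 hβ0 q
    have hG1 := gamma_pos1 hβ0 q
    have hb : (0:ℝ) ≤ β * q.2 := by positivity
    have hq1 : (0:ℝ) ≤ (q.1:ℝ) := Nat.cast_nonneg _
    have hbk : β * (q.2:ℝ) ≤ (q.2:ℝ) := by
      have : (0:ℝ) ≤ (q.2:ℝ) := Nat.cast_nonneg _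
      nlinarith
    have hstep : Real.Gamma (β * q.2 + q.1 + 1) ≤ Real.Gamma (β * q.2 + q.1 + 2) := by
      have h := gamma_step (y := β * q.2 + q.1 + 1) (by linarith)
      calc Real.Gamma (β * q.2 + q.1 + 1) ≤ Real.Gamma (β * q.2 + q.1 + 1 + 1) := h
        _ = Real.Gamma (β * q.2 + q.1 + 2) := by ring_nf
    have hp2 : ((q.1:ℝ) + 1) ≤ 2 ^ q.1 := by
      exact_mod_cast (Nat.lt_two_pow_self : q.1 < 2 ^ q.1)
    have hk2 : ((q.2:ℝ) + 1) ≤ 2 ^ q.2 := by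
      exact_mod_cast (Nat.lt_two_pow_self : q.2 < 2 ^ q.2)
    have hfac : ((q.1:ℝ) + 1) * ((q.1:ℝ) + 1 + β * q.2) ≤ 4 ^ q.1 * 2 ^ q.2 := by
      have h1 : ((q.1:ℝ) + 1 + β * q.2) ≤ ((q.1:ℝ) + 1) * ((q.2:ℝ) + 1) := by nlinarith
      have h2 : ((q.1:ℝ) + 1) * ((q.1:ℝ) + 1 + β * q.2) ≤
          (((q.1:ℝ) + 1) * ((q.1:ℝ) + 1)) * ((q.2:ℝ) + 1) := by nlinarith
      have h3 : (((q.1:ℝ) + 1) * ((q.1:ℝ) + 1)) ≤ 4 ^ q.1 := by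
        have : ((q.1:ℝ) + 1) * ((q.1:ℝ) + 1) ≤ (2:ℝ) ^ q.1 * 2 ^ q.1 := by nlinarith
        calc ((q.1:ℝ) + 1) * ((q.1:ℝ) + 1) ≤ (2:ℝ) ^ q.1 * 2 ^ q.1 := this
          _ = 4 ^ q.1 := by rw [← mul_pow]; norm_num
      calc ((q.1:ℝ) + 1) * ((q.1:ℝ) + 1 + β * q.2)
          ≤ (((q.1:ℝ) + 1) * ((q.1:ℝ) + 1)) * ((q.2:ℝ) + 1) := h2
        _ ≤ 4 ^ q.1 * 2 ^ q.2 := by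
            apply mul_le_mul h3 hk2 (by positivity) (by positivity)
    have hnum : (((q.1:ℝ) + 1) * ((q.1:ℝ) + 1 + β * q.2)) *
        ((ν * M) ^ q.1 * (|w| * M ^ β) ^ q.2) ≤
        (4 * (ν * M)) ^ q.1 * (2 * (|w| * M ^ β)) ^ q.2 := by
      calc (((q.1:ℝ) + 1) * ((q.1:ℝ) + 1 + β * q.2)) * ((ν * M) ^ q.1 * (|w| * M ^ β) ^ q.2)
          ≤ (4 ^ q.1 * 2 ^ q.2) * ((ν * M) ^ q.1 * (|w| * M ^ β) ^ q.2) := by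
            apply mul_le_mul_of_nonneg_right hfac (by positivity)
        _ = (4 * (ν * M)) ^ q.1 * (2 * (|w| * M ^ β)) ^ q.2 := by
            rw [mul_pow 4 (ν * M), mul_pow 2 (|w| * M ^ β)]; ring
    calc (((q.1:ℝ) + 1) * ((q.1:ℝ) + 1 + β * q.2)) * ((ν * M) ^ q.1 * (|w| * M ^ β) ^ q.2) /
          Real.Gamma (β * q.2 + q.1 + 2)
        ≤ (4 * (ν * M)) ^ q.1 * (2 * (|w| * M ^ β)) ^ q.2 / Real.Gamma (β * q.2 + q.1 + 2) := by
          gcongr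
      _ ≤ (4 * (ν * M)) ^ q.1 * (2 * (|w| * M ^ β)) ^ q.2 / Real.Gamma (β * q.2 + q.1 + 1) := by
          apply div_le_div_of_nonneg_left (by positivity) hG1 hstep

include hν hβ0 hβ1 in
lemma Gtsum_hasDeriv {M y : ℝ} (hM : 1 < M) (hy : y ∈ Set.Ioo (0:ℝ) M) :
    HasDerivAt (fun x => ∑' q : ℕ × ℕ, Gterm ν w β q x)
      (∑' q : ℕ × ℕ, Gterm' ν w β q y) y := by
  exact hasDerivAt_tsum_of_isPreconnected (Gderiv_bound_summable hν hβ0 hβ1 hM.le)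
    isOpen_Ioo (convex_Ioo (0:ℝ) M).isPreconnected
    (fun q z _ => Gterm_hasDeriv hβ0 q z)
    (fun q z hz => by
      have hz' : z ∈ Set.Icc (0:ℝ) M := ⟨hz.1.le, hz.2.le⟩
      simpa [Real.norm_eq_abs] using Gderiv_bound hν hβ0 hM.le hz' q)
    (⟨one_pos, hM⟩ : (1:ℝ) ∈ Set.Ioo (0:ℝ) M)
    (Gterm_summable hν hβ0 hβ1 hM.le ⟨zero_le_one, hM.le⟩) hy

include hν hβ0 hβ1 in
lemma Gderiv_sum_eq {y : ℝ} (hy : 0 < y) :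
    ∑' q : ℕ × ℕ, Gterm' ν w β q y =
      (∑' q : ℕ × ℕ, Fterm ν w β q y) + ν * ∑' q : ℕ × ℕ, Gterm ν w β q y := by
  set M : ℝ := y + 1 with hMdef
  have hM : 1 ≤ M := by simp only [hMdef]; linarith
  have hyIcc : y ∈ Set.Icc (0:ℝ) M := ⟨hy.le, by simp only [hMdef]; linarith⟩
  -- pointwise : Gterm' q y = (q.1+1) * Fterm q y
  have hpt : ∀ q : ℕ × ℕ, Gterm' ν w β q y = ((q.1:ℝ) + 1) * Fterm ν w β q y := by
    intro q
    have hb : (0:ℝ) ≤ β * q.2 := by positivity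
    have hq1 : (0:ℝ) ≤ (q.1:ℝ) := Nat.cast_nonneg _
    have harg : β * q.2 + q.1 + 1 ≠ 0 := by linarith
    have hrec : Real.Gamma (β * q.2 + q.1 + 2) =
        (β * q.2 + q.1 + 1) * Real.Gamma (β * q.2 + q.1 + 1) := by
      rw [show β * (q.2:ℝ) + q.1 + 2 = (β * q.2 + q.1 + 1) + 1 from by ring,
        Real.Gamma_add_one harg]
    have hG1 := gamma_pos1 hβ0 q
    rw [Gterm', Fterm, hrec]
    have he : (q.1:ℝ) + 1 + β * q.2 = β * q.2 + q.1 + 1 := by ring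
    rw [he]
    field_simp
  -- the injection (p,k) ↦ (p+1,k)
  set j : ℕ × ℕ → ℕ × ℕ := fun q => (q.1 + 1, q.2) with hj
  have hjinj : Function.Injective j := by
    intro q q' h
    simp only [hj, Prod.ext_iff] at h
    exact Prod.ext (by omega) h.2
  set h : ℕ × ℕ → ℝ := fun q => (q.1:ℝ) * Fterm ν w β q y with hh
  have hsupp : Function.support h ⊆ Set.range j := by
    intro q hq
    rcases q with ⟨p, k⟩
    rcases Nat.eq_zero_or_pos p with hp | hp
    · exfalso; apply hq; simp [hh, hp]
    · exact ⟨(p - 1, k), by simp [hj]; omega⟩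
  have hzero : ∀ x ∉ Set.range j, h x = 0 := by
    intro x hx
    by_contra hne
    exact hx (hsupp hne)
  have hcomp : ∀ q : ℕ × ℕ, h (j q) = ν * Gterm ν w β q y := by
    intro q
    rcases q with ⟨p, k⟩
    simp only [hh, hj, Fterm, Gterm]
    have hc : ((p + 1 : ℕ) : ℝ) = (p:ℝ) + 1 := by push_cast; ring
    rw [hc]
    have harg : β * (k:ℝ) + ((p:ℝ) + 1) + 1 = β * k + p + 2 := by ring
    rw [harg]
    have hexp : (p:ℝ) + 1 + β * k = (p:ℝ) + 1 + β * k := rfl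
    rw [pow_succ]
    ring
  have hGsummable : Summable (fun q : ℕ × ℕ => ν * Gterm ν w β q y) :=
    (Gterm_summable hν hβ0 hβ1 hM hyIcc).mul_left ν
  have hsummable_h : Summable h := by
    rw [← hjinj.summable_iff hzero]
    exact hGsummable.congr (fun q => (hcomp q).symm)
  have htsum_h : ∑' q, h q = ν * ∑' q : ℕ × ℕ, Gterm ν w β q y := by
    rw [← hjinj.tsum_eq hsupp]
    calc ∑' q, h (j q) = ∑' q : ℕ × ℕ, ν * Gterm ν w β q y := tsum_congr hcomp
      _ = ν * ∑' q : ℕ × ℕ, Gterm ν w β q y := tsum_mul_left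
  have hFsummable : Summable (fun q : ℕ × ℕ => Fterm ν w β q y) :=
    Fterm_summable hν hβ0 hβ1 hM hyIcc
  calc ∑' q : ℕ × ℕ, Gterm' ν w β q y
      = ∑' q : ℕ × ℕ, (Fterm ν w β q y + h q) := by
        apply tsum_congr
        intro q
        rw [hpt q]; simp only [hh]; ring
    _ = (∑' q : ℕ × ℕ, Fterm ν w β q y) + ∑' q, h q :=
        Summable.tsum_add hFsummable hsummable_h
    _ = (∑' q : ℕ × ℕ, Fterm ν w β q y) + ν * ∑' q : ℕ × ℕ, Gterm ν w β q y := by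
        rw [htsum_h]

include hν hβ0 hβ1 in
lemma F_repr {x : ℝ} (hx : 0 < x) :
    ∑' m : ℕ, ν ^ m * x ^ m * mittagLeffler β (m + 1) (w * x ^ β) =
      ∑' q : ℕ × ℕ, Fterm ν w β q x := by
  have hM : 1 ≤ x + 1 := by linarith
  have hxIcc : x ∈ Set.Icc (0:ℝ) (x+1) := ⟨hx.le, by linarith⟩
  have hsum : Summable (fun q : ℕ × ℕ => Fterm ν w β q x) :=
    Fterm_summable hν hβ0 hβ1 hM hxIcc
  rw [Summable.tsum_prod hsum]
  apply tsum_congr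
  intro m
  have hpt : ∀ k : ℕ, Fterm ν w β (m, k) x =
      ν ^ m * x ^ m * ((w * x ^ β) ^ k / Real.Gamma (β * k + ((m:ℝ) + 1))) := by
    intro k
    rw [Fterm]
    simp only
    rw [exp_split hx m k, mul_pow,
      show β * (k:ℝ) + ((m:ℝ) + 1) = β * k + m + 1 from by ring]
    ring
  calc ν ^ m * x ^ m * mittagLeffler β (m + 1) (w * x ^ β)
      = ∑' k : ℕ, ν ^ m * x ^ m * ((w * x ^ β) ^ k / Real.Gamma (β * k + ((m:ℝ) + 1))) := by
        rw [mittagLeffler, ← tsum_mul_left]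
    _ = ∑' k : ℕ, Fterm ν w β (m, k) x := tsum_congr (fun k => (hpt k).symm)

end params

noncomputable def Tterm (ν w β : ℝ) (q : ℕ × ℕ × ℕ) (x : ℝ) : ℝ :=
  ν ^ (q.1 + q.2.1) * w ^ q.2.2 / Real.Gamma (β * q.2.2 + q.1 + q.2.1 + 2) *
    x ^ (((q.1 + q.2.1 + 1 : ℕ) : ℝ) + β * q.2.2)

section params2
variable {ν w β : ℝ} (hν : 0 < ν) (hβ0 : 0 < β) (hβ1 : β ≤ 1)

include hβ0 in
lemma gamma_pos3 (q : ℕ × ℕ × ℕ) : 0 < Real.Gamma (β * q.2.2 + q.1 + q.2.1 + 2) :=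
  Real.Gamma_pos_of_pos (by
    have h1 : (0:ℝ) ≤ β * q.2.2 := by positivity
    have h2 : (0:ℝ) ≤ (q.1:ℝ) := Nat.cast_nonneg _
    have h3 : (0:ℝ) ≤ (q.2.1:ℝ) := Nat.cast_nonneg _
    linarith)

include hν hβ0 hβ1 in
lemma Tterm_summable {M x : ℝ} (hM : 1 ≤ M) (hx : x ∈ Set.Icc 0 M) :
    Summable (fun q : ℕ × ℕ × ℕ => Tterm ν w β q x) := by
  have hM0 : (0:ℝ) < M := by linarith
  have hs := (summable3 β (ν * M) (ν * M) (|w| * M ^ β) hβ0 hβ1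
    (by positivity) (by positivity) (by positivity)).mul_left M
  apply Summable.of_norm
  apply Summable.of_nonneg_of_le (fun q => norm_nonneg _) _ hs
  intro q
  obtain ⟨m, n, k⟩ := q
  simp only
  have hG2 := gamma_pos3 hβ0 ((m, n, k) : ℕ × ℕ × ℕ)
  have hb : (0:ℝ) ≤ β * k := by positivity
  have hm' : (0:ℝ) ≤ (m:ℝ) := Nat.cast_nonneg _
  have hn' : (0:ℝ) ≤ (n:ℝ) := Nat.cast_nonneg _
  have hG1 : 0 < Real.Gamma (β * k + m + n + 1) := Real.Gamma_pos_of_pos (by linarith)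
  have hstep : Real.Gamma (β * k + m + n + 1) ≤ Real.Gamma (β * k + m + n + 2) := by
    have h := gamma_step (y := β * k + m + n + 1) (by linarith)
    calc Real.Gamma (β * k + m + n + 1) ≤ Real.Gamma (β * k + m + n + 1 + 1) := h
      _ = Real.Gamma (β * k + m + n + 2) := by ring_nf
  have hGq : Real.Gamma (β * (k:ℝ) + (m + n : ℕ) + 2) = Real.Gamma (β * k + m + n + 2) := by
    push_cast; ring_nf
  have hxc : |x ^ (((m + n + 1 : ℕ) : ℝ) + β * k)| ≤ M ^ m * M ^ n * (M ^ β) ^ k * M := by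
    rw [abs_of_nonneg (Real.rpow_nonneg hx.1 _)]
    have h1 : x ^ (((m + n + 1 : ℕ) : ℝ) + β * k) ≤ M ^ (((m + n + 1 : ℕ) : ℝ) + β * k) :=
      rpow_le_of_mem hM hx (by positivity)
    have h2 : M ^ (((m + n + 1 : ℕ) : ℝ) + β * k) = M ^ m * M ^ n * (M ^ β) ^ k * M := by
      rw [exp_split hM0 (m + n + 1) k, pow_succ, pow_add]
      ring
    rw [← h2]; exact h1
  have hnum : |ν ^ (m + n) * w ^ k / Real.Gamma (β * (k:ℝ) + (m + n : ℕ) + 2)| =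
      ν ^ m * ν ^ n * |w| ^ k / Real.Gamma (β * k + m + n + 2) := by
    rw [abs_div, abs_mul, abs_pow, abs_pow, abs_of_pos hν, hGq, abs_of_pos hG2, pow_add]
  calc ‖Tterm ν w β (m, n, k) x‖
      = |ν ^ (m + n) * w ^ k / Real.Gamma (β * (k:ℝ) + (m + n : ℕ) + 2)| *
          |x ^ (((m + n + 1 : ℕ) : ℝ) + β * k)| := by
        rw [Real.norm_eq_abs, Tterm, abs_mul]
        push_cast
        ring_nf
    _ ≤ ν ^ m * ν ^ n * |w| ^ k / Real.Gamma (β * k + m + n + 2) *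
          (M ^ m * M ^ n * (M ^ β) ^ k * M) := by
        rw [hnum]
        exact mul_le_mul_of_nonneg_left hxc (by positivity)
    _ ≤ ν ^ m * ν ^ n * |w| ^ k / Real.Gamma (β * k + m + n + 1) *
          (M ^ m * M ^ n * (M ^ β) ^ k * M) := by
        apply mul_le_mul_of_nonneg_right _ (by positivity)
        exact div_le_div_of_nonneg_left (by positivity) hG1 hstep
    _ = M * ((ν * M) ^ m * (ν * M) ^ n * (|w| * M ^ β) ^ k /
          Real.Gamma (β * k + m + n + 1)) := by
        rw [mul_pow, mul_pow, mul_pow]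
        ring

include hν hβ0 hβ1 in
lemma T_repr {x : ℝ} (hx : 0 < x) :
    (∑' m : ℕ, ∑' n : ℕ,
        ν ^ (m + n) * x ^ (m + n + 1) * mittagLeffler β ((m : ℝ) + n + 2) (w * x ^ β)) =
      ∑' q : ℕ × ℕ × ℕ, Tterm ν w β q x := by
  have hM : 1 ≤ x + 1 := by linarith
  have hxIcc : x ∈ Set.Icc (0:ℝ) (x+1) := ⟨hx.le, by linarith⟩
  have hsum : Summable (fun q : ℕ × ℕ × ℕ => Tterm ν w β q x) :=
    Tterm_summable hν hβ0 hβ1 hM hxIcc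
  rw [Summable.tsum_prod hsum]
  apply tsum_congr
  intro m
  have hsum2 : Summable (fun r : ℕ × ℕ => Tterm ν w β (m, r) x) := hsum.prod_factor m
  rw [Summable.tsum_prod hsum2]
  apply tsum_congr
  intro n
  have hpt : ∀ k : ℕ, Tterm ν w β (m, n, k) x =
      ν ^ (m + n) * x ^ (m + n + 1) *
        ((w * x ^ β) ^ k / Real.Gamma (β * k + ((m:ℝ) + n + 2))) := by
    intro k
    rw [Tterm]
    simp only
    rw [exp_split hx (m + n + 1) k, mul_pow,
      show β * (k:ℝ) + ((m:ℝ) + (n:ℝ) + 2) = β * k + (m:ℝ) + (n:ℝ) + 2 from by ring]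
    ring
  calc ν ^ (m + n) * x ^ (m + n + 1) * mittagLeffler β ((m:ℝ) + n + 2) (w * x ^ β)
      = ∑' k : ℕ, ν ^ (m + n) * x ^ (m + n + 1) *
          ((w * x ^ β) ^ k / Real.Gamma (β * k + ((m:ℝ) + n + 2))) := by
        rw [mittagLeffler, ← tsum_mul_left]
    _ = ∑' k : ℕ, Tterm ν w β (m, n, k) x := tsum_congr (fun k => (hpt k).symm)

def diagEquiv : (Σ _q : ℕ × ℕ, Fin (_q.1 + 1)) ≃ ℕ × ℕ × ℕ where
  toFun s := ((s.2 : ℕ), s.1.1 - (s.2 : ℕ), s.1.2)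
  invFun q := ⟨(q.1 + q.2.1, q.2.2), ⟨q.1, by omega⟩⟩
  left_inv := by
    rintro ⟨⟨p, k⟩, ⟨i, hi⟩⟩
    have h1 : i + (p - i) = p := by omega
    refine Sigma.ext (by simp [Prod.ext_iff, h1]) ?_
    refine (Fin.heq_ext_iff (by simp [h1])).mpr rfl
  right_inv := by
    rintro ⟨m, n, k⟩
    simp only
    congr 1 <;> simp <;> omega

include hν hβ0 hβ1 in
lemma T_reindex {x : ℝ} (hx : 0 < x) :
    ∑' q : ℕ × ℕ × ℕ, Tterm ν w β q x = ∑' q : ℕ × ℕ, Gterm ν w β q x := by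
  have hM : 1 ≤ x + 1 := by linarith
  have hxIcc : x ∈ Set.Icc (0:ℝ) (x+1) := ⟨hx.le, by linarith⟩
  have hsum : Summable (fun q : ℕ × ℕ × ℕ => Tterm ν w β q x) :=
    Tterm_summable hν hβ0 hβ1 hM hxIcc
  rw [← diagEquiv.tsum_eq (fun q : ℕ × ℕ × ℕ => Tterm ν w β q x)]
  have hsig : Summable (fun s : Σ _q : ℕ × ℕ, Fin (_q.1 + 1) =>
      Tterm ν w β (diagEquiv s) x) := diagEquiv.summable_iff.mpr hsum
  rw [Summable.tsum_sigma hsig]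
  apply tsum_congr
  intro q
  have hpt : ∀ i : Fin (q.1 + 1), Tterm ν w β (diagEquiv ⟨q, i⟩) x =
      ν ^ q.1 * w ^ q.2 / Real.Gamma (β * q.2 + q.1 + 2) *
        x ^ (((q.1 + 1 : ℕ) : ℝ) + β * q.2) := by
    intro i
    have hle : (i : ℕ) ≤ q.1 := by omega
    have hadd : (i : ℕ) + (q.1 - (i : ℕ)) = q.1 := by omega
    have hc2 : ((q.1 - (i:ℕ) : ℕ) : ℝ) = (q.1 : ℝ) - (i : ℕ) := by
      exact Nat.cast_sub hle
    rw [Tterm]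
    simp only [diagEquiv, Equiv.coe_fn_mk]
    rw [hadd, show β * (q.2:ℝ) + ((i:ℕ):ℝ) + ((q.1 - (i:ℕ) : ℕ) : ℝ) + 2 =
      β * (q.2:ℝ) + (q.1:ℝ) + 2 from by rw [hc2]; ring]
  rw [tsum_fintype]
  rw [Finset.sum_congr rfl (fun i _ => hpt i), Finset.sum_const, Finset.card_univ,
    Fintype.card_fin]
  rw [Gterm, nsmul_eq_mul]
  have hc : ((q.1 + 1 : ℕ) : ℝ) = (q.1 : ℝ) + 1 := by push_cast; ring
  rw [hc, show (q.1 : ℝ) + 1 + β * q.2 = (q.1 : ℝ) + 1 + β * q.2 from rfl]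
  ring

end params2

theorem expected_number_of_events
    (Λ₀ α γ ν β : ℝ) (hΛ₀ : 0 < Λ₀) (hα : α ∈ Set.Ioo (0 : ℝ) 1)
    (hγ : 0 < γ) (hν : 0 < ν) (hβ : β ∈ Set.Ioo (0 : ℝ) 1)
    (w : ℝ) (hw : w = (α - 1) * γ + ν ^ β) (hw0 : w ≠ 0)
    (lam : ℝ → ℝ)
    (hlam : ∀ t, 0 < t → lam t =
      Λ₀ * ((ν ^ β - γ) / w +
        (α * γ * Real.exp (-ν * t) / w) *
          ∑' m : ℕ, ν ^ m * t ^ m * mittagLeffler β (m + 1) (w * t ^ β))) :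
    ∀ t, 0 < t →
      ∫ u in (0 : ℝ)..t, lam u =
        Λ₀ * (((ν ^ β - γ) / w) * t +
          (α * γ * Real.exp (-ν * t) / w) *
            ∑' m : ℕ, ∑' n : ℕ,
              ν ^ (m + n) * t ^ (m + n + 1) * mittagLeffler β (m + n + 2) (w * t ^ β)) := by
  intro t ht
  have hβ0 : 0 < β := hβ.1
  have hβ1 : β ≤ 1 := hβ.2.le
  set C : ℝ := (ν ^ β - γ) / w with hC
  set K : ℝ := α * γ / w with hK
  set Gfun : ℝ → ℝ := fun x => ∑' q : ℕ × ℕ, Gterm ν w β q x with hGfun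
  set Ffun : ℝ → ℝ := fun x => ∑' q : ℕ × ℕ, Fterm ν w β q x with hFfun
  set N : ℝ → ℝ := fun u => Λ₀ * (C * u + K * (Real.exp (-ν * u) * Gfun u)) with hN
  set f' : ℝ → ℝ := fun u => Λ₀ * (C + K * (Real.exp (-ν * u) * Ffun u)) with hf'
  have hM : (1:ℝ) < t + 1 := by linarith
  have hsub : Set.Icc (0:ℝ) t ⊆ Set.Icc (0:ℝ) (t+1) :=
    Set.Icc_subset_Icc le_rfl (by linarith)
  -- derivative of N on Ioo 0 t
  have hNderiv : ∀ u ∈ Set.Ioo (0:ℝ) t, HasDerivAt N (f' u) u := by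
    intro u hu
    have huM : u ∈ Set.Ioo (0:ℝ) (t+1) := ⟨hu.1, by linarith [hu.2]⟩
    have hG : HasDerivAt Gfun (∑' q : ℕ × ℕ, Gterm' ν w β q u) u :=
      Gtsum_hasDeriv hν hβ0 hβ1 hM huM
    have hGsum : ∑' q : ℕ × ℕ, Gterm' ν w β q u = Ffun u + ν * Gfun u :=
      Gderiv_sum_eq hν hβ0 hβ1 hu.1
    have hlin : HasDerivAt (fun x : ℝ => -ν * x) (-ν) u := by
      simpa using (hasDerivAt_id u).const_mul (-ν)
    have hE : HasDerivAt (fun x : ℝ => Real.exp (-ν * x))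
        (Real.exp (-ν * u) * (-ν)) u := hlin.exp
    have hprod := hE.mul hG
    have hCu : HasDerivAt (fun x : ℝ => C * x) C u := by
      simpa using (hasDerivAt_id u).const_mul C
    have htot := (hCu.add ((hprod.const_mul K))).const_mul Λ₀
    convert htot using 1
    · rfl
    · rfl
    · rfl
    rw [hf', hGsum]
    ring
  -- continuity of N on Icc 0 t
  have hNcont : ContinuousOn N (Set.Icc 0 t) := by
    apply ContinuousOn.mul continuousOn_const
    apply ContinuousOn.add
    · exact (continuousOn_id.const_smul C).congr (fun x _ => by simp [smul_eq_mul])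
    · apply ContinuousOn.mul continuousOn_const
      apply ContinuousOn.mul
      · exact ((Real.continuous_exp.comp (continuous_const.mul continuous_id)).continuousOn)
      · exact (GcontOn hν hβ0 hβ1 hM.le).mono hsub
  -- continuity of f' on Icc 0 t, integrability
  have hf'cont : ContinuousOn f' (Set.Icc 0 t) := by
    apply ContinuousOn.mul continuousOn_const
    apply ContinuousOn.add continuousOn_const
    apply ContinuousOn.mul continuousOn_const
    apply ContinuousOn.mul
    · exact ((Real.continuous_exp.comp (continuous_const.mul continuous_id)).continuousOn)
    · exact (FcontOn hν hβ0 hβ1 hM.le).mono hsub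
  have hint : IntervalIntegrable f' MeasureTheory.volume 0 t := by
    apply ContinuousOn.intervalIntegrable
    rwa [Set.uIcc_of_le ht.le]
  -- lam = f' on (0, t]
  have hlamf' : ∀ u ∈ Set.uIoc (0:ℝ) t, lam u = f' u := by
    intro u hu
    rw [Set.uIoc_of_le ht.le] at hu
    have hu0 : 0 < u := hu.1
    rw [hlam u hu0, hf']
    rw [F_repr hν hβ0 hβ1 hu0]
    rw [hK, hC]
    ring
  have hIcongr : ∫ u in (0:ℝ)..t, lam u = ∫ u in (0:ℝ)..t, f' u := by
    apply intervalIntegral.integral_congr_ae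
    exact MeasureTheory.ae_of_all _ hlamf'
  -- FTC
  have hFTC : ∫ u in (0:ℝ)..t, f' u = N t - N 0 :=
    intervalIntegral.integral_eq_sub_of_hasDerivAt_of_le ht.le hNcont hNderiv hint
  have hN0 : N 0 = 0 := by
    rw [hN]
    simp only [mul_zero, zero_add, neg_zero, Real.exp_zero, one_mul]
    rw [hGfun]
    simp only
    rw [Gsum_zero hβ0]
    ring
  -- identify N t with RHS
  have hT : (∑' m : ℕ, ∑' n : ℕ,
      ν ^ (m + n) * t ^ (m + n + 1) * mittagLeffler β ((m:ℝ) + n + 2) (w * t ^ β)) = Gfun t := by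
    rw [T_repr hν hβ0 hβ1 ht, T_reindex hν hβ0 hβ1 ht]
  rw [hIcongr, hFTC, hN0, sub_zero, hN]
  simp only
  rw [hT]
  rw [hK, hC]
  ring
end

section
/- (Hardy–Littlewood Tauberian theorem.) Let f : (0,∞) → ℝ be nonnegative, integrable over every finite interval (0,T), and such that t ↦ e^{−st} f(t) is integrable over (0,∞) for every s > 0. Suppose there exist constants H > 0 and a > 0 such that ∫₀^∞ e^{−st} f(t) dt ∼ H s^{−a} as s → 0⁺ (i.e. lim_{s→0⁺} s^a ∫₀^∞ e^{−st} f(t) dt = H). Then ∫₀^t f(u) du ∼ (H/Γ(1+a)) t^a as t → ∞ (i.e. lim_{t→∞} t^{−a} ∫₀^t f(u) du = H/Γ(1+a)). -/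
open MeasureTheory Real Filter
open Set intervalIntegral

section HLTaux
variable {f : ℝ → ℝ} {a H : ℝ}


-- measurability of f on Ioi 0
lemma f_aesm (h1 : MeasureTheory.IntegrableOn (fun t => Real.exp (-1 * t) * f t) (Set.Ioi 0)) :
    AEStronglyMeasurable f (volume.restrict (Set.Ioi 0)) := by
  have h := h1.aestronglyMeasurable
  have hf : f = fun t => Real.exp t * (Real.exp (-1 * t) * f t) := by
    funext t; rw [← mul_assoc, ← Real.exp_add]; norm_num
  rw [hf]
  exact (Real.continuous_exp.aestronglyMeasurable).mul h

lemma integrable_aux (hf_nonneg : ∀ t, 0 < t → 0 ≤ f t)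
    (hf_expint : ∀ s : ℝ, 0 < s →
      MeasureTheory.IntegrableOn (fun t => Real.exp (-s * t) * f t) (Set.Ioi 0))
    {g : ℝ → ℝ} (hg : Continuous g) {s : ℝ} (hs : 0 < s) :
    MeasureTheory.IntegrableOn
      (fun t => Real.exp (-s * t) * g (Real.exp (-s * t)) * f t) (Set.Ioi 0) := by
  obtain ⟨x, hx, hmax⟩ := isCompact_Icc.exists_isMaxOn (⟨0, Set.left_mem_Icc.2 zero_le_one⟩ :
      (Set.Icc (0:ℝ) 1).Nonempty) (continuous_abs.comp hg).continuousOn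
  set C := |g x| with hC
  have hfm := f_aesm (hf_expint 1 one_pos)
  apply Integrable.mono' ((hf_expint s hs).const_mul C)
  · exact (((Real.continuous_exp.comp (continuous_const.mul continuous_id)).aestronglyMeasurable).mul
      ((hg.comp (Real.continuous_exp.comp (continuous_const.mul continuous_id))).aestronglyMeasurable)).mul hfm
  · filter_upwards [ae_restrict_mem measurableSet_Ioi] with t ht
    have hst : 0 < s * t := mul_pos hs ht
    have h1 : Real.exp (-s * t) ∈ Set.Icc (0:ℝ) 1 :=
      ⟨(Real.exp_pos _).le, Real.exp_le_one_iff.2 (by nlinarith)⟩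
    have hf := hf_nonneg t ht
    have hC' : |g (Real.exp (-s*t))| ≤ C := hmax h1
    have he : (0:ℝ) < Real.exp (-s * t) := Real.exp_pos _
    calc |Real.exp (-s*t) * g (Real.exp (-s*t)) * f t|
        = Real.exp (-s*t) * |g (Real.exp (-s*t))| * f t := by
          rw [abs_mul, abs_mul, abs_of_pos he, abs_of_nonneg hf]
      _ ≤ Real.exp (-s*t) * C * f t := by
          gcongr
      _ = C * (Real.exp (-s*t) * f t) := by ring



lemma scale_lemma
    (hasymp : Filter.Tendsto
      (fun s : ℝ => s ^ a * ∫ t in Set.Ioi (0 : ℝ), Real.exp (-s * t) * f t)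
      (nhdsWithin 0 (Set.Ioi 0)) (nhds H))
    {c : ℝ} (hc : 0 < c) :
    Filter.Tendsto
      (fun s : ℝ => s ^ a * ∫ t in Set.Ioi (0 : ℝ), Real.exp (-(c * s) * t) * f t)
      (nhdsWithin 0 (Set.Ioi 0)) (nhds (H * c ^ (-a))) := by
  have hmap : Tendsto (fun s : ℝ => c * s) (nhdsWithin 0 (Set.Ioi 0)) (nhdsWithin 0 (Set.Ioi 0)) := by
    apply tendsto_nhdsWithin_of_tendsto_nhds_of_eventually_within
    · exact ((continuous_const.mul continuous_id).tendsto' 0 0 (by simp)).mono_left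
        nhdsWithin_le_nhds
    · filter_upwards [self_mem_nhdsWithin] with s hs
      exact mul_pos hc hs
  have h1 := (hasymp.comp hmap).const_mul (c ^ (-a))
  have hlim : c ^ (-a) * H = H * c ^ (-a) := mul_comm _ _
  rw [hlim] at h1
  apply h1.congr'
  filter_upwards [self_mem_nhdsWithin] with s hs
  simp only [Function.comp]
  rw [Real.mul_rpow hc.le hs.le, Real.rpow_neg hc.le]
  have hca : c ^ a ≠ 0 := (Real.rpow_pos_of_pos hc a).ne'
  field_simp

lemma mono_limit
    (hasymp : Filter.Tendsto
      (fun s : ℝ => s ^ a * ∫ t in Set.Ioi (0 : ℝ), Real.exp (-s * t) * f t)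
      (nhdsWithin 0 (Set.Ioi 0)) (nhds H)) (k : ℕ) :
    Filter.Tendsto
      (fun s : ℝ => s ^ a * ∫ t in Set.Ioi (0 : ℝ),
        Real.exp (-s * t) * Real.exp (-s * t) ^ k * f t)
      (nhdsWithin 0 (Set.Ioi 0)) (nhds (H * ((k : ℝ) + 1) ^ (-a))) := by
  have hc : (0:ℝ) < (k : ℝ) + 1 := by positivity
  have := scale_lemma hasymp hc
  apply this.congr
  intro s
  congr 1
  apply setIntegral_congr_fun measurableSet_Ioi
  intro t _
  have h : Real.exp (-s * t) * Real.exp (-s * t) ^ k = Real.exp (-(((k:ℝ)+1) * s) * t) := by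
    rw [← Real.exp_nat_mul, ← Real.exp_add]
    congr 1
    push_cast
    ring
  simp only
  rw [h]

lemma gamma_int_s8 (ha : 0 < a) (k : ℕ) :
    ∫ x in Set.Ioi (0:ℝ), Real.exp (-x) * Real.exp (-x) ^ k * x ^ (a - 1)
      = ((k : ℝ) + 1) ^ (-a) * Real.Gamma a := by
  have hr : (0:ℝ) < (k : ℝ) + 1 := by positivity
  have := Real.integral_rpow_mul_exp_neg_mul_Ioi ha hr
  rw [show ∫ x in Set.Ioi (0:ℝ), Real.exp (-x) * Real.exp (-x) ^ k * x ^ (a - 1)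
      = ∫ x in Set.Ioi (0:ℝ), x ^ (a-1) * Real.exp (-(((k:ℝ)+1) * x)) from ?_, this]
  · rw [one_div, Real.inv_rpow hr.le, ← Real.rpow_neg hr.le]
  · apply setIntegral_congr_fun measurableSet_Ioi
    intro x _
    simp only
    rw [← Real.exp_nat_mul, ← Real.exp_add,
      show -x + (k : ℝ) * -x = -(((k:ℝ)+1) * x) by ring]
    ring

lemma gamma_integrable_s8 (ha : 0 < a) (k : ℕ) :
    MeasureTheory.IntegrableOn
      (fun x => Real.exp (-x) * Real.exp (-x) ^ k * x ^ (a - 1)) (Set.Ioi (0:ℝ)) := by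
  apply Integrable.mono' (Real.GammaIntegral_convergent ha)
  · exact ((Real.continuous_exp.comp continuous_neg).aestronglyMeasurable.mul
      (((Real.continuous_exp.comp continuous_neg).pow k).aestronglyMeasurable)).mul
      (Measurable.aestronglyMeasurable (by measurability))
  · filter_upwards [ae_restrict_mem measurableSet_Ioi] with x hx
    have h1 : (0:ℝ) < x := hx
    have he : Real.exp (-x) ≤ 1 := Real.exp_le_one_iff.2 (by linarith)
    have hep : (0:ℝ) < Real.exp (-x) := Real.exp_pos _
    have hxp : (0:ℝ) ≤ x ^ (a-1) := Real.rpow_nonneg h1.le _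
    rw [Real.norm_eq_abs, abs_mul, abs_mul, abs_of_pos hep, abs_of_pos (pow_pos hep k), abs_of_nonneg hxp]
    have : Real.exp (-x) ^ k ≤ 1 := pow_le_one₀ hep.le he
    nlinarith [mul_nonneg (mul_nonneg hep.le hxp) (sub_nonneg.2 this)]


lemma poly_int_eq (hf_nonneg : ∀ t, 0 < t → 0 ≤ f t)
    (hf_expint : ∀ s : ℝ, 0 < s →
      MeasureTheory.IntegrableOn (fun t => Real.exp (-s * t) * f t) (Set.Ioi 0))
    {s : ℝ} (hs : 0 < s) (p : Polynomial ℝ) :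
    ∫ t in Set.Ioi (0:ℝ), Real.exp (-s*t) * Polynomial.eval (Real.exp (-s*t)) p * f t
      = ∑ k ∈ Finset.range (p.natDegree + 1),
          p.coeff k * ∫ t in Set.Ioi (0:ℝ), Real.exp (-s*t) * Real.exp (-s*t) ^ k * f t := by
  have h1 : ∀ t : ℝ, Real.exp (-s*t) * Polynomial.eval (Real.exp (-s*t)) p * f t
      = ∑ k ∈ Finset.range (p.natDegree + 1),
          p.coeff k * (Real.exp (-s*t) * Real.exp (-s*t) ^ k * f t) := by
    intro t
    rw [Polynomial.eval_eq_sum_range, Finset.mul_sum, Finset.sum_mul]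
    exact Finset.sum_congr rfl fun k _ => by ring
  simp_rw [h1]
  rw [MeasureTheory.integral_finset_sum]
  · exact Finset.sum_congr rfl fun k _ => integral_const_mul _ _
  · exact fun k _ => ((integrable_aux hf_nonneg hf_expint (continuous_pow k) hs).const_mul _)

lemma poly_gamma_eq (ha : 0 < a) (p : Polynomial ℝ) :
    ∫ x in Set.Ioi (0:ℝ), Real.exp (-x) * Polynomial.eval (Real.exp (-x)) p * x ^ (a-1)
      = ∑ k ∈ Finset.range (p.natDegree + 1),
          p.coeff k * (((k:ℝ)+1) ^ (-a) * Real.Gamma a) := by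
  have h1 : ∀ x : ℝ, Real.exp (-x) * Polynomial.eval (Real.exp (-x)) p * x ^ (a-1)
      = ∑ k ∈ Finset.range (p.natDegree + 1),
          p.coeff k * (Real.exp (-x) * Real.exp (-x) ^ k * x ^ (a-1)) := by
    intro x
    rw [Polynomial.eval_eq_sum_range, Finset.mul_sum, Finset.sum_mul]
    exact Finset.sum_congr rfl fun k _ => by ring
  simp_rw [h1]
  rw [MeasureTheory.integral_finset_sum]
  · exact Finset.sum_congr rfl fun k _ => by rw [MeasureTheory.integral_const_mul, gamma_int_s8 ha k]
  · exact fun k _ => ((gamma_integrable_s8 ha k).const_mul _)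

lemma poly_limit (hf_nonneg : ∀ t, 0 < t → 0 ≤ f t)
    (hf_expint : ∀ s : ℝ, 0 < s →
      MeasureTheory.IntegrableOn (fun t => Real.exp (-s * t) * f t) (Set.Ioi 0))
    (ha : 0 < a)
    (hasymp : Filter.Tendsto
      (fun s : ℝ => s ^ a * ∫ t in Set.Ioi (0 : ℝ), Real.exp (-s * t) * f t)
      (nhdsWithin 0 (Set.Ioi 0)) (nhds H)) (p : Polynomial ℝ) :
    Filter.Tendsto
      (fun s : ℝ => s ^ a *
        ∫ t in Set.Ioi (0:ℝ), Real.exp (-s*t) * Polynomial.eval (Real.exp (-s*t)) p * f t)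
      (nhdsWithin 0 (Set.Ioi 0))
      (nhds (H * (Real.Gamma a)⁻¹ *
        ∫ x in Set.Ioi (0:ℝ), Real.exp (-x) * Polynomial.eval (Real.exp (-x)) p * x ^ (a-1))) := by
  have hΓ : Real.Gamma a ≠ 0 := (Real.Gamma_pos_of_pos ha).ne'
  have hsum : Filter.Tendsto
      (fun s : ℝ => ∑ k ∈ Finset.range (p.natDegree + 1),
        p.coeff k * (s ^ a * ∫ t in Set.Ioi (0:ℝ),
          Real.exp (-s*t) * Real.exp (-s*t) ^ k * f t))
      (nhdsWithin 0 (Set.Ioi 0))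
      (nhds (∑ k ∈ Finset.range (p.natDegree + 1),
        p.coeff k * (H * ((k:ℝ)+1) ^ (-a)))) :=
    tendsto_finset_sum _ fun k _ => (mono_limit hasymp k).const_mul _
  have heq : H * (Real.Gamma a)⁻¹ *
      ∫ x in Set.Ioi (0:ℝ), Real.exp (-x) * Polynomial.eval (Real.exp (-x)) p * x ^ (a-1)
      = ∑ k ∈ Finset.range (p.natDegree + 1), p.coeff k * (H * ((k:ℝ)+1) ^ (-a)) := by
    rw [poly_gamma_eq ha p, Finset.mul_sum]
    refine Finset.sum_congr rfl fun k _ => ?_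
    field_simp
  rw [heq]
  apply hsum.congr'
  filter_upwards [self_mem_nhdsWithin] with s hs
  rw [poly_int_eq hf_nonneg hf_expint hs p, Finset.mul_sum]
  exact Finset.sum_congr rfl fun k _ => by ring



end HLTaux

lemma integrable_aux2 {g : ℝ → ℝ} (hg : Continuous g) {a : ℝ} (ha : 0 < a) :
    MeasureTheory.IntegrableOn
      (fun x => Real.exp (-x) * g (Real.exp (-x)) * x ^ (a - 1)) (Set.Ioi (0:ℝ)) := by
  obtain ⟨x₀, hx₀, hmax⟩ := isCompact_Icc.exists_isMaxOn (⟨0, Set.left_mem_Icc.2 zero_le_one⟩ :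
      (Set.Icc (0:ℝ) 1).Nonempty) (continuous_abs.comp hg).continuousOn
  set C := |g x₀| with hC
  apply Integrable.mono' ((Real.GammaIntegral_convergent ha).const_mul C)
  · exact (((Real.continuous_exp.comp continuous_neg).aestronglyMeasurable).mul
      ((hg.comp (Real.continuous_exp.comp continuous_neg)).aestronglyMeasurable)).mul
      (Measurable.aestronglyMeasurable (by measurability))
  · filter_upwards [ae_restrict_mem measurableSet_Ioi] with x hx
    have h1 : (0:ℝ) < x := hx
    have hmem : Real.exp (-x) ∈ Set.Icc (0:ℝ) 1 :=
      ⟨(Real.exp_pos _).le, Real.exp_le_one_iff.2 (by linarith)⟩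
    have hC' : |g (Real.exp (-x))| ≤ C := hmax hmem
    have he : (0:ℝ) < Real.exp (-x) := Real.exp_pos _
    have hxp : (0:ℝ) ≤ x ^ (a-1) := Real.rpow_nonneg h1.le _
    rw [Real.norm_eq_abs, abs_mul, abs_mul, abs_of_pos he, abs_of_nonneg hxp]
    calc Real.exp (-x) * |g (Real.exp (-x))| * x ^ (a-1)
        ≤ Real.exp (-x) * C * x ^ (a-1) := by gcongr
      _ = C * (Real.exp (-x) * x ^ (a-1)) := by ring

lemma key_lemma {f : ℝ → ℝ} {a H : ℝ} (hf_nonneg : ∀ t, 0 < t → 0 ≤ f t)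
    (hf_expint : ∀ s : ℝ, 0 < s →
      MeasureTheory.IntegrableOn (fun t => Real.exp (-s * t) * f t) (Set.Ioi 0))
    (ha : 0 < a) (hH : 0 < H)
    (hasymp : Filter.Tendsto
      (fun s : ℝ => s ^ a * ∫ t in Set.Ioi (0 : ℝ), Real.exp (-s * t) * f t)
      (nhdsWithin 0 (Set.Ioi 0)) (nhds H))
    {g : ℝ → ℝ} (hg : Continuous g) :
    Filter.Tendsto
      (fun s : ℝ => s ^ a *
        ∫ t in Set.Ioi (0:ℝ), Real.exp (-s*t) * g (Real.exp (-s*t)) * f t)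
      (nhdsWithin 0 (Set.Ioi 0))
      (nhds (H * (Real.Gamma a)⁻¹ *
        ∫ x in Set.Ioi (0:ℝ), Real.exp (-x) * g (Real.exp (-x)) * x ^ (a-1))) := by
  have hΓpos : 0 < Real.Gamma a := Real.Gamma_pos_of_pos ha
  rw [Metric.tendsto_nhds]
  intro ε hε
  set ε' : ℝ := ε / (4 * (H + 1)) with hε'def
  have hε' : 0 < ε' := by positivity
  obtain ⟨p, hp⟩ := exists_polynomial_near_of_continuousOn 0 1 g hg.continuousOn ε' hε'
  have hpc : Continuous fun u : ℝ => Polynomial.eval u p := p.continuous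
  set Mg := ∫ x in Set.Ioi (0:ℝ), Real.exp (-x) * g (Real.exp (-x)) * x ^ (a-1) with hMg
  set Mp := ∫ x in Set.Ioi (0:ℝ),
      Real.exp (-x) * Polynomial.eval (Real.exp (-x)) p * x ^ (a-1) with hMp
  -- (i) |Mg - Mp| ≤ ε' * Γ a
  have hMg_int := integrable_aux2 hg ha
  have hMp_int := integrable_aux2 hpc ha
  have hMdiff : |Mg - Mp| ≤ ε' * Real.Gamma a := by
    rw [hMg, hMp, ← integral_sub hMg_int hMp_int]
    have h1 : |∫ x in Set.Ioi (0:ℝ),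
        (Real.exp (-x) * g (Real.exp (-x)) * x ^ (a-1)
          - Real.exp (-x) * Polynomial.eval (Real.exp (-x)) p * x ^ (a-1))|
        ≤ ∫ x in Set.Ioi (0:ℝ), ε' * (Real.exp (-x) * x ^ (a-1)) := by
      rw [← Real.norm_eq_abs]
      apply le_trans (MeasureTheory.norm_integral_le_integral_norm _)
      apply setIntegral_mono_on (hMg_int.sub hMp_int).norm
        ((Real.GammaIntegral_convergent ha).const_mul ε') measurableSet_Ioi
      intro x hx
      rw [Real.norm_eq_abs]
      have h1 : (0:ℝ) < x := hx
      have hmem : Real.exp (-x) ∈ Set.Icc (0:ℝ) 1 :=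
        ⟨(Real.exp_pos _).le, Real.exp_le_one_iff.2 (by linarith)⟩
      have hgp : |g (Real.exp (-x)) - Polynomial.eval (Real.exp (-x)) p| ≤ ε' := by
        rw [abs_sub_comm]; exact (hp _ hmem).le
      have he : (0:ℝ) < Real.exp (-x) := Real.exp_pos _
      have hxp : (0:ℝ) ≤ x ^ (a-1) := Real.rpow_nonneg h1.le _
      calc |Real.exp (-x) * g (Real.exp (-x)) * x ^ (a-1)
            - Real.exp (-x) * Polynomial.eval (Real.exp (-x)) p * x ^ (a-1)|
          = Real.exp (-x) * |g (Real.exp (-x)) - Polynomial.eval (Real.exp (-x)) p|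
              * x ^ (a-1) := by
            rw [show Real.exp (-x) * g (Real.exp (-x)) * x ^ (a-1)
                - Real.exp (-x) * Polynomial.eval (Real.exp (-x)) p * x ^ (a-1)
                = Real.exp (-x) * (g (Real.exp (-x)) - Polynomial.eval (Real.exp (-x)) p)
                  * x ^ (a-1) by ring, abs_mul, abs_mul, abs_of_pos he, abs_of_nonneg hxp]
        _ ≤ Real.exp (-x) * ε' * x ^ (a-1) := by gcongr
        _ = ε' * (Real.exp (-x) * x ^ (a-1)) := by ring
    calc _ ≤ ∫ x in Set.Ioi (0:ℝ), ε' * (Real.exp (-x) * x ^ (a-1)) := h1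
      _ = ε' * Real.Gamma a := by rw [MeasureTheory.integral_const_mul, ← Real.Gamma_eq_integral ha]
  -- (ii) pointwise in s > 0 difference bound
  have hΦdiff : ∀ s : ℝ, 0 < s →
      |(∫ t in Set.Ioi (0:ℝ), Real.exp (-s*t) * g (Real.exp (-s*t)) * f t)
        - ∫ t in Set.Ioi (0:ℝ), Real.exp (-s*t) * Polynomial.eval (Real.exp (-s*t)) p * f t|
      ≤ ε' * ∫ t in Set.Ioi (0:ℝ), Real.exp (-s*t) * f t := by
    intro s hs
    have hg_int := integrable_aux hf_nonneg hf_expint hg hs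
    have hp_int := integrable_aux hf_nonneg hf_expint hpc hs
    rw [← integral_sub hg_int hp_int]
    rw [← Real.norm_eq_abs]
    apply le_trans (MeasureTheory.norm_integral_le_integral_norm _)
    rw [← MeasureTheory.integral_const_mul]
    apply setIntegral_mono_on (hg_int.sub hp_int).norm
      ((hf_expint s hs).const_mul ε') measurableSet_Ioi
    intro t ht
    rw [Real.norm_eq_abs]
    have ht0 : (0:ℝ) < t := ht
    have hmem : Real.exp (-s*t) ∈ Set.Icc (0:ℝ) 1 :=
      ⟨(Real.exp_pos _).le, Real.exp_le_one_iff.2 (by nlinarith)⟩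
    have hgp : |g (Real.exp (-s*t)) - Polynomial.eval (Real.exp (-s*t)) p| ≤ ε' := by
      rw [abs_sub_comm]; exact (hp _ hmem).le
    have he : (0:ℝ) < Real.exp (-s*t) := Real.exp_pos _
    have hft : 0 ≤ f t := hf_nonneg t ht0
    calc |Real.exp (-s*t) * g (Real.exp (-s*t)) * f t
          - Real.exp (-s*t) * Polynomial.eval (Real.exp (-s*t)) p * f t|
        = Real.exp (-s*t) * |g (Real.exp (-s*t)) - Polynomial.eval (Real.exp (-s*t)) p|
            * f t := by
          rw [show Real.exp (-s*t) * g (Real.exp (-s*t)) * f t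
              - Real.exp (-s*t) * Polynomial.eval (Real.exp (-s*t)) p * f t
              = Real.exp (-s*t) * (g (Real.exp (-s*t)) - Polynomial.eval (Real.exp (-s*t)) p)
                * f t by ring, abs_mul, abs_mul, abs_of_pos he, abs_of_nonneg hft]
      _ ≤ Real.exp (-s*t) * ε' * f t := by gcongr
      _ = ε' * (Real.exp (-s*t) * f t) := by ring
  -- (iii) eventual bound on s^a L s
  have hLbd : ∀ᶠ s in nhdsWithin (0:ℝ) (Set.Ioi 0),
      s ^ a * ∫ t in Set.Ioi (0:ℝ), Real.exp (-s*t) * f t ≤ H + 1 := by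
    filter_upwards [Metric.tendsto_nhds.mp hasymp 1 one_pos] with s hs
    rw [Real.dist_eq] at hs
    have := abs_lt.mp hs
    linarith [this.1, this.2]
  -- (iv) eventual closeness for polynomial
  have hpoly := Metric.tendsto_nhds.mp
    (poly_limit hf_nonneg hf_expint ha hasymp p) (ε/4) (by positivity)
  filter_upwards [self_mem_nhdsWithin, hLbd, hpoly] with s hs hL hpol
  rw [Real.dist_eq] at hpol ⊢
  rw [← hMp] at hpol
  have hs0 : (0:ℝ) < s := hs
  have hsa : (0:ℝ) ≤ s ^ a := Real.rpow_nonneg hs0.le a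
  have hLpos : 0 ≤ s ^ a * ∫ t in Set.Ioi (0:ℝ), Real.exp (-s*t) * f t := by
    apply mul_nonneg hsa
    apply setIntegral_nonneg measurableSet_Ioi
    intro t ht
    exact mul_nonneg (Real.exp_pos _).le (hf_nonneg t ht)
  have h2 := hΦdiff s hs0
  have key1 : |s ^ a * (∫ t in Set.Ioi (0:ℝ), Real.exp (-s*t) * g (Real.exp (-s*t)) * f t)
      - s ^ a * ∫ t in Set.Ioi (0:ℝ),
          Real.exp (-s*t) * Polynomial.eval (Real.exp (-s*t)) p * f t|
      ≤ ε' * (H + 1) := by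
    rw [← mul_sub, abs_mul, abs_of_nonneg hsa]
    calc s ^ a * |_| ≤ s ^ a * (ε' * ∫ t in Set.Ioi (0:ℝ), Real.exp (-s*t) * f t) := by
          gcongr
      _ = ε' * (s ^ a * ∫ t in Set.Ioi (0:ℝ), Real.exp (-s*t) * f t) := by ring
      _ ≤ ε' * (H + 1) := by gcongr
  have key3 : |H * (Real.Gamma a)⁻¹ * Mp - H * (Real.Gamma a)⁻¹ * Mg| ≤ ε' * H := by
    rw [← mul_sub, abs_mul, abs_of_nonneg (by positivity : (0:ℝ) ≤ H * (Real.Gamma a)⁻¹)]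
    rw [abs_sub_comm] at hMdiff
    calc H * (Real.Gamma a)⁻¹ * |Mp - Mg| ≤ H * (Real.Gamma a)⁻¹ * (ε' * Real.Gamma a) := by
          gcongr
      _ = ε' * H := by field_simp
  have hfinal : |s ^ a * (∫ t in Set.Ioi (0:ℝ), Real.exp (-s*t) * g (Real.exp (-s*t)) * f t)
      - H * (Real.Gamma a)⁻¹ * Mg| < ε := by
    have triangle := abs_sub_le
      (s ^ a * ∫ t in Set.Ioi (0:ℝ), Real.exp (-s*t) * g (Real.exp (-s*t)) * f t)
      (s ^ a * ∫ t in Set.Ioi (0:ℝ),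
        Real.exp (-s*t) * Polynomial.eval (Real.exp (-s*t)) p * f t)
      (H * (Real.Gamma a)⁻¹ * Mg)
    have triangle2 := abs_sub_le
      (s ^ a * ∫ t in Set.Ioi (0:ℝ),
        Real.exp (-s*t) * Polynomial.eval (Real.exp (-s*t)) p * f t)
      (H * (Real.Gamma a)⁻¹ * Mp)
      (H * (Real.Gamma a)⁻¹ * Mg)
    have he1 : ε' * (H + 1) = ε / 4 := by
      rw [hε'def]; field_simp
    have he2 : ε' * H < ε / 4 := by
      rw [hε'def, div_mul_eq_mul_div, div_lt_div_iff₀ (by positivity) (by positivity)]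
      nlinarith
    linarith [key1, key3, hpol, triangle, triangle2]
  exact hfinal
noncomputable def Gfun (c d u : ℝ) : ℝ := (max u d)⁻¹ * min 1 (max 0 ((u - c)/(d - c)))

lemma Gfun_cont {c d : ℝ} (hd : 0 < d) : Continuous (Gfun c d) := by
  apply Continuous.mul
  · exact (continuous_id.max continuous_const).inv₀
      fun x => (lt_of_lt_of_le hd (le_max_right x d)).ne'
  · exact continuous_const.min (continuous_const.max
      ((continuous_id.sub continuous_const).div_const _))

lemma Gfun_nonneg {c d : ℝ} (hd : 0 < d) (u : ℝ) : 0 ≤ Gfun c d u := by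
  apply mul_nonneg
  · exact (inv_nonneg).2 (le_trans hd.le (le_max_right u d))
  · exact le_min zero_le_one (le_max_left 0 _)

lemma Gfun_mul_le_one {c d : ℝ} (hd : 0 < d) {u : ℝ} (hu : 0 ≤ u) :
    u * Gfun c d u ≤ 1 := by
  have hmax : (0:ℝ) < max u d := lt_of_lt_of_le hd (le_max_right u d)
  have h1 : u * (max u d)⁻¹ ≤ 1 := by
    rw [← mul_inv_cancel₀ hmax.ne']
    exact mul_le_mul_of_nonneg_right (le_max_left u d) (inv_nonneg.2 hmax.le)
  have h2 : min 1 (max 0 ((u - c)/(d - c))) ≤ 1 := min_le_left _ _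
  have h3 : 0 ≤ min 1 (max 0 ((u - c)/(d - c))) := le_min zero_le_one (le_max_left 0 _)
  calc u * Gfun c d u = (u * (max u d)⁻¹) * min 1 (max 0 ((u - c)/(d - c))) := by
        rw [Gfun]; ring
    _ ≤ 1 * 1 := mul_le_mul h1 h2 h3 zero_le_one
    _ = 1 := by norm_num

lemma Gfun_zero {c d u : ℝ} (hcd : c < d) (hu : u ≤ c) : Gfun c d u = 0 := by
  have h1 : (u - c)/(d - c) ≤ 0 :=
    div_nonpos_of_nonpos_of_nonneg (sub_nonpos.2 hu) (sub_pos.2 hcd).le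
  rw [Gfun, max_eq_left h1, min_eq_right zero_le_one, mul_zero]

lemma Gfun_inv {c d u : ℝ} (hcd : c < d) (hu : d ≤ u) : Gfun c d u = u⁻¹ := by
  have h1 : (1:ℝ) ≤ (u - c)/(d - c) := (one_le_div (sub_pos.2 hcd)).2 (by linarith)
  rw [Gfun, max_eq_left hu, max_eq_right (by linarith : (0:ℝ) ≤ (u - c)/(d - c)),
    min_eq_left h1, mul_one]

lemma rpow_Ioc_integral {a : ℝ} (ha : 0 < a) {T : ℝ} (hT : 0 < T) :
    ∫ x in Set.Ioc (0:ℝ) T, x ^ (a-1) = T ^ a / a := by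
  rw [← intervalIntegral.integral_of_le hT.le,
    integral_rpow (Or.inl (by linarith : (-1:ℝ) < a - 1))]
  rw [Real.zero_rpow (by intro h; apply ha.ne'; linarith : a - 1 + 1 ≠ 0)]
  rw [show a - 1 + 1 = a by ring]
  ring

lemma A_upper {a δ : ℝ} (ha : 0 < a) (hδ : 0 < δ) :
    ∫ x in Set.Ioi (0:ℝ),
      Real.exp (-x) * Gfun (Real.exp (-(1+δ))) (Real.exp (-1)) (Real.exp (-x)) * x ^ (a-1)
    ≤ (1+δ) ^ a / a := by
  set c := Real.exp (-(1+δ)) with hcdef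
  set d := Real.exp (-(1:ℝ)) with hddef
  have hd : 0 < d := Real.exp_pos _
  have hcd : c < d := Real.exp_lt_exp.2 (by linarith)
  have hT : (0:ℝ) < 1 + δ := by linarith
  have hint : MeasureTheory.IntegrableOn
      (fun x => Real.exp (-x) * Gfun c d (Real.exp (-x)) * x ^ (a-1)) (Set.Ioi 0) :=
    integrable_aux2 (Gfun_cont hd) ha
  have hzero : Set.EqOn (fun x => Real.exp (-x) * Gfun c d (Real.exp (-x)) * x ^ (a-1))
      (fun _ => (0:ℝ)) (Set.Ioi (1+δ)) := by
    intro x hx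
    have hx' : (1:ℝ) + δ < x := hx
    simp only
    rw [Gfun_zero hcd (by rw [hcdef]; exact Real.exp_le_exp.2 (by linarith))]
    ring
  have hsplit : (∫ x in Set.Ioi (0:ℝ), Real.exp (-x) * Gfun c d (Real.exp (-x)) * x ^ (a-1))
      = (∫ x in Set.Ioc (0:ℝ) (1+δ), Real.exp (-x) * Gfun c d (Real.exp (-x)) * x ^ (a-1))
        + ∫ x in Set.Ioi (1+δ), Real.exp (-x) * Gfun c d (Real.exp (-x)) * x ^ (a-1) := by
    rw [← setIntegral_union (Set.Ioc_disjoint_Ioi le_rfl) measurableSet_Ioi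
      (hint.mono_set Set.Ioc_subset_Ioi_self) (hint.mono_set (Set.Ioi_subset_Ioi hT.le)),
      Set.Ioc_union_Ioi_eq_Ioi hT.le]
  rw [hsplit, setIntegral_congr_fun measurableSet_Ioi hzero, integral_zero, add_zero]
  calc (∫ x in Set.Ioc (0:ℝ) (1+δ), Real.exp (-x) * Gfun c d (Real.exp (-x)) * x ^ (a-1))
      ≤ ∫ x in Set.Ioc (0:ℝ) (1+δ), x ^ (a-1) := by
        apply setIntegral_mono_on (hint.mono_set Set.Ioc_subset_Ioi_self)
          ((intervalIntegrable_rpow' (by linarith : (-1:ℝ) < a - 1)).1) measurableSet_Ioc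
        intro x hx
        calc Real.exp (-x) * Gfun c d (Real.exp (-x)) * x ^ (a-1)
            ≤ 1 * x ^ (a-1) :=
              mul_le_mul_of_nonneg_right (Gfun_mul_le_one hd (Real.exp_pos _).le)
                (Real.rpow_nonneg hx.1.le _)
          _ = x ^ (a-1) := one_mul _
    _ = (1+δ) ^ a / a := rpow_Ioc_integral ha hT

lemma A_lower {a δ : ℝ} (ha : 0 < a) (hδ : 0 < δ) (hδ1 : δ < 1) :
    (1-δ) ^ a / a ≤
    ∫ x in Set.Ioi (0:ℝ),
      Real.exp (-x) * Gfun (Real.exp (-(1:ℝ))) (Real.exp (-(1-δ))) (Real.exp (-x)) * x ^ (a-1) := by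
  set d := Real.exp (-(1:ℝ)) with hddef
  set b := Real.exp (-(1-δ)) with hbdef
  have hd : 0 < d := Real.exp_pos _
  have hb : 0 < b := Real.exp_pos _
  have hdb : d < b := Real.exp_lt_exp.2 (by linarith)
  have hT : (0:ℝ) < 1 - δ := by linarith
  have hint : MeasureTheory.IntegrableOn
      (fun x => Real.exp (-x) * Gfun d b (Real.exp (-x)) * x ^ (a-1)) (Set.Ioi 0) :=
    integrable_aux2 (Gfun_cont hb) ha
  have heq : Set.EqOn (fun x : ℝ => x ^ (a-1))
      (fun x => Real.exp (-x) * Gfun d b (Real.exp (-x)) * x ^ (a-1))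
      (Set.Ioc (0:ℝ) (1-δ)) := by
    intro x hx
    simp only
    rw [Gfun_inv hdb (by rw [hbdef]; exact Real.exp_le_exp.2 (by linarith [hx.2]))]
    rw [mul_inv_cancel₀ (Real.exp_ne_zero _), one_mul]
  calc (1-δ) ^ a / a = ∫ x in Set.Ioc (0:ℝ) (1-δ), x ^ (a-1) :=
        (rpow_Ioc_integral ha hT).symm
    _ = ∫ x in Set.Ioc (0:ℝ) (1-δ),
          Real.exp (-x) * Gfun d b (Real.exp (-x)) * x ^ (a-1) :=
        setIntegral_congr_fun measurableSet_Ioc heq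
    _ ≤ ∫ x in Set.Ioi (0:ℝ),
          Real.exp (-x) * Gfun d b (Real.exp (-x)) * x ^ (a-1) := by
        apply setIntegral_mono_set hint
        · refine (ae_restrict_iff' measurableSet_Ioi).2 (Filter.Eventually.of_forall ?_)
          intro x hx
          exact mul_nonneg (mul_nonneg (Real.exp_pos _).le (Gfun_nonneg hb _))
            (Real.rpow_nonneg (le_of_lt hx) _)
        · exact HasSubset.Subset.eventuallyLE (fun x hx => hx.1)
lemma hIoc_int {f : ℝ → ℝ}
    (hf_locint : ∀ T : ℝ, 0 < T → MeasureTheory.IntegrableOn f (Set.Ioo 0 T))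
    {T : ℝ} (hT : 0 < T) : MeasureTheory.IntegrableOn f (Set.Ioc 0 T) :=
  (hf_locint (T+1) (by linarith)).mono_set
    (fun x hx => ⟨hx.1, lt_of_le_of_lt hx.2 (lt_add_one T)⟩)

lemma indicator_integral {f : ℝ → ℝ} {T : ℝ} :
    ∫ t in Set.Ioi (0:ℝ), (Set.Ioc (0:ℝ) T).indicator f t = ∫ t in Set.Ioc (0:ℝ) T, f t := by
  rw [MeasureTheory.integral_indicator measurableSet_Ioc, Measure.restrict_restrict measurableSet_Ioc,
    Set.inter_eq_left.2 (fun x hx => hx.1)]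

lemma indicator_integrable {f : ℝ → ℝ}
    (hf_locint : ∀ T : ℝ, 0 < T → MeasureTheory.IntegrableOn f (Set.Ioo 0 T))
    {T : ℝ} (hT : 0 < T) :
    MeasureTheory.Integrable ((Set.Ioc (0:ℝ) T).indicator f)
      (volume.restrict (Set.Ioi 0)) := by
  rw [integrable_indicator_iff measurableSet_Ioc, IntegrableOn,
    Measure.restrict_restrict measurableSet_Ioc, Set.inter_eq_left.2 (fun x hx => hx.1)]
  exact hIoc_int hf_locint hT

lemma sandwich_upper {f : ℝ → ℝ} (hf_nonneg : ∀ t, 0 < t → 0 ≤ f t)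
    (hf_locint : ∀ T : ℝ, 0 < T → MeasureTheory.IntegrableOn f (Set.Ioo 0 T))
    (hf_expint : ∀ s : ℝ, 0 < s →
      MeasureTheory.IntegrableOn (fun t => Real.exp (-s * t) * f t) (Set.Ioi 0))
    {δ : ℝ} (hδ : 0 < δ) {s : ℝ} (hs : 0 < s) :
    ∫ t in Set.Ioc (0:ℝ) s⁻¹, f t ≤
      ∫ t in Set.Ioi (0:ℝ),
        Real.exp (-s*t) * Gfun (Real.exp (-(1+δ))) (Real.exp (-1)) (Real.exp (-s*t)) * f t := by
  have hd : (0:ℝ) < Real.exp (-(1:ℝ)) := Real.exp_pos _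
  have hcd : Real.exp (-(1+δ)) < Real.exp (-(1:ℝ)) := Real.exp_lt_exp.2 (by linarith)
  have hsi : (0:ℝ) < s⁻¹ := inv_pos.2 hs
  rw [← indicator_integral]
  apply setIntegral_mono_on (indicator_integrable hf_locint hsi)
    (integrable_aux hf_nonneg hf_expint (Gfun_cont hd) hs) measurableSet_Ioi
  intro t ht
  have ht0 : (0:ℝ) < t := ht
  by_cases hts : t ≤ s⁻¹
  · rw [Set.indicator_of_mem (show t ∈ Set.Ioc (0:ℝ) s⁻¹ from ⟨ht0, hts⟩) f]
    have hst1 : s * t ≤ 1 := by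
      calc s * t ≤ s * s⁻¹ := mul_le_mul_of_nonneg_left hts hs.le
        _ = 1 := mul_inv_cancel₀ hs.ne'
    have hge : Real.exp (-(1:ℝ)) ≤ Real.exp (-s*t) :=
      Real.exp_le_exp.2 (by rw [neg_mul]; linarith)
    rw [Gfun_inv hcd hge, mul_inv_cancel₀ (Real.exp_ne_zero _), one_mul]
  · rw [Set.indicator_of_notMem (fun hmem : t ∈ Set.Ioc (0:ℝ) s⁻¹ => hts hmem.2) f]
    exact mul_nonneg (mul_nonneg (Real.exp_pos _).le (Gfun_nonneg hd _)) (hf_nonneg t ht0)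

lemma sandwich_lower {f : ℝ → ℝ} (hf_nonneg : ∀ t, 0 < t → 0 ≤ f t)
    (hf_locint : ∀ T : ℝ, 0 < T → MeasureTheory.IntegrableOn f (Set.Ioo 0 T))
    (hf_expint : ∀ s : ℝ, 0 < s →
      MeasureTheory.IntegrableOn (fun t => Real.exp (-s * t) * f t) (Set.Ioi 0))
    {δ : ℝ} (hδ : 0 < δ) (hδ1 : δ < 1) {s : ℝ} (hs : 0 < s) :
    (∫ t in Set.Ioi (0:ℝ),
        Real.exp (-s*t) * Gfun (Real.exp (-(1:ℝ))) (Real.exp (-(1-δ))) (Real.exp (-s*t)) * f t)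
      ≤ ∫ t in Set.Ioc (0:ℝ) s⁻¹, f t := by
  have hb : (0:ℝ) < Real.exp (-(1-δ)) := Real.exp_pos _
  have hdb : Real.exp (-(1:ℝ)) < Real.exp (-(1-δ)) := Real.exp_lt_exp.2 (by linarith)
  have hsi : (0:ℝ) < s⁻¹ := inv_pos.2 hs
  rw [← indicator_integral]
  apply setIntegral_mono_on (integrable_aux hf_nonneg hf_expint (Gfun_cont hb) hs)
    (indicator_integrable hf_locint hsi) measurableSet_Ioi
  intro t ht
  have ht0 : (0:ℝ) < t := ht
  by_cases hts : t ≤ s⁻¹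
  · rw [Set.indicator_of_mem (show t ∈ Set.Ioc (0:ℝ) s⁻¹ from ⟨ht0, hts⟩) f]
    calc Real.exp (-s*t) * Gfun (Real.exp (-(1:ℝ))) (Real.exp (-(1-δ))) (Real.exp (-s*t)) * f t
        ≤ 1 * f t := mul_le_mul_of_nonneg_right
          (Gfun_mul_le_one hb (Real.exp_pos _).le) (hf_nonneg t ht0)
      _ = f t := one_mul _
  · rw [Set.indicator_of_notMem (fun hmem : t ∈ Set.Ioc (0:ℝ) s⁻¹ => hts hmem.2) f]
    push_neg at hts
    have hst1 : 1 ≤ s * t := by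
      calc (1:ℝ) = s * s⁻¹ := (mul_inv_cancel₀ hs.ne').symm
        _ ≤ s * t := mul_le_mul_of_nonneg_left hts.le hs.le
    rw [Gfun_zero hdb (Real.exp_le_exp.2 (by rw [neg_mul]; linarith))]
    simp

lemma main_claim {f : ℝ → ℝ} {a H : ℝ} (hf_nonneg : ∀ t, 0 < t → 0 ≤ f t)
    (hf_locint : ∀ T : ℝ, 0 < T → MeasureTheory.IntegrableOn f (Set.Ioo 0 T))
    (hf_expint : ∀ s : ℝ, 0 < s →
      MeasureTheory.IntegrableOn (fun t => Real.exp (-s * t) * f t) (Set.Ioi 0))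
    (hH : 0 < H) (ha : 0 < a)
    (hasymp : Filter.Tendsto
      (fun s : ℝ => s ^ a * ∫ t in Set.Ioi (0 : ℝ), Real.exp (-s * t) * f t)
      (nhdsWithin 0 (Set.Ioi 0)) (nhds H)) :
    Filter.Tendsto (fun s : ℝ => s ^ a * ∫ t in Set.Ioc (0:ℝ) s⁻¹, f t)
      (nhdsWithin 0 (Set.Ioi 0)) (nhds (H / Real.Gamma (1+a))) := by
  have hΓ : 0 < Real.Gamma a := Real.Gamma_pos_of_pos ha
  have hΓ1 : Real.Gamma (1+a) = a * Real.Gamma a := by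
    rw [add_comm, Real.Gamma_add_one ha.ne']
  have hleq : H / Real.Gamma (1+a) = H * (Real.Gamma a)⁻¹ * ((1:ℝ)^a / a) := by
    rw [hΓ1, Real.one_rpow]
    field_simp
  rw [Metric.tendsto_nhds]
  intro ε hε
  -- continuity in δ
  have hbase : ∀ c : ℝ, Filter.Tendsto (fun δ : ℝ => H * (Real.Gamma a)⁻¹ * ((1+c*δ)^a / a))
      (nhdsWithin 0 (Set.Ioi 0)) (nhds (H / Real.Gamma (1+a))) := by
    intro c
    have h1 : ContinuousAt (fun x : ℝ => x ^ a) 1 :=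
      Real.continuousAt_rpow_const 1 a (Or.inl one_ne_zero)
    have h2 : ContinuousAt (fun δ : ℝ => 1 + c*δ) 0 :=
      (continuous_const.add (continuous_const.mul continuous_id)).continuousAt
    have h3 : ContinuousAt (fun δ : ℝ => (1+c*δ)^a) 0 :=
      ContinuousAt.rpow_const h2 (Or.inr ha.le)
    have h4 := ((h3.div_const a).const_mul (H * (Real.Gamma a)⁻¹))
    simp only [ContinuousAt, mul_zero, add_zero] at h4
    rw [hleq]
    exact h4.mono_left nhdsWithin_le_nhds
  have hup := Metric.tendsto_nhds.mp (hbase 1) (ε/2) (half_pos hε)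
  have hlo := Metric.tendsto_nhds.mp (hbase (-1)) (ε/2) (half_pos hε)
  have hδsmall : ∀ᶠ δ : ℝ in nhdsWithin 0 (Set.Ioi 0), δ < 1 :=
    (eventually_lt_nhds zero_lt_one).filter_mono nhdsWithin_le_nhds
  obtain ⟨δ, ⟨⟨hu', hl'⟩, hδmem⟩, hδ1⟩ :=
    (((hup.and hlo).and self_mem_nhdsWithin).and hδsmall).exists
  have hδ : (0:ℝ) < δ := hδmem
  rw [Real.dist_eq] at hu' hl'
  have hub : H * (Real.Gamma a)⁻¹ * ((1+δ)^a / a) < H / Real.Gamma (1+a) + ε/2 := by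
    have := (abs_lt.mp hu').2
    rw [show (1:ℝ) + 1*δ = 1 + δ by ring] at this
    linarith
  have hlb : H / Real.Gamma (1+a) - ε/2 < H * (Real.Gamma a)⁻¹ * ((1-δ)^a / a) := by
    have := (abs_lt.mp hl').1
    rw [show (1:ℝ) + (-1)*δ = 1 - δ by ring] at this
    linarith
  -- key lemma applications
  have Kp := key_lemma hf_nonneg hf_expint ha hH hasymp
    (Gfun_cont (Real.exp_pos (-(1:ℝ))) (c := Real.exp (-(1+δ))))
  have Km := key_lemma hf_nonneg hf_expint ha hH hasymp
    (Gfun_cont (Real.exp_pos (-(1-δ))) (c := Real.exp (-(1:ℝ))))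
  have Ep := Metric.tendsto_nhds.mp Kp (ε/2) (half_pos hε)
  have Em := Metric.tendsto_nhds.mp Km (ε/2) (half_pos hε)
  have hHΓ : (0:ℝ) ≤ H * (Real.Gamma a)⁻¹ := by positivity
  have hAp : H * (Real.Gamma a)⁻¹ *
      (∫ x in Set.Ioi (0:ℝ), Real.exp (-x) *
        Gfun (Real.exp (-(1+δ))) (Real.exp (-1)) (Real.exp (-x)) * x ^ (a-1))
      ≤ H * (Real.Gamma a)⁻¹ * ((1+δ)^a / a) :=
    mul_le_mul_of_nonneg_left (A_upper ha hδ) hHΓ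
  have hAm : H * (Real.Gamma a)⁻¹ * ((1-δ)^a / a) ≤ H * (Real.Gamma a)⁻¹ *
      (∫ x in Set.Ioi (0:ℝ), Real.exp (-x) *
        Gfun (Real.exp (-(1:ℝ))) (Real.exp (-(1-δ))) (Real.exp (-x)) * x ^ (a-1)) :=
    mul_le_mul_of_nonneg_left (A_lower ha hδ hδ1) hHΓ
  filter_upwards [self_mem_nhdsWithin, Ep, Em] with s hs ep em
  have hs0 : (0:ℝ) < s := hs
  have hsa : (0:ℝ) ≤ s ^ a := Real.rpow_nonneg hs0.le a
  rw [Real.dist_eq] at ep em ⊢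
  have mup : s ^ a * ∫ t in Set.Ioc (0:ℝ) s⁻¹, f t ≤
      s ^ a * ∫ t in Set.Ioi (0:ℝ),
        Real.exp (-s*t) * Gfun (Real.exp (-(1+δ))) (Real.exp (-1)) (Real.exp (-s*t)) * f t :=
    mul_le_mul_of_nonneg_left (sandwich_upper hf_nonneg hf_locint hf_expint hδ hs0) hsa
  have mlo : s ^ a * (∫ t in Set.Ioi (0:ℝ),
        Real.exp (-s*t) * Gfun (Real.exp (-(1:ℝ))) (Real.exp (-(1-δ))) (Real.exp (-s*t)) * f t)
      ≤ s ^ a * ∫ t in Set.Ioc (0:ℝ) s⁻¹, f t :=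
    mul_le_mul_of_nonneg_left (sandwich_lower hf_nonneg hf_locint hf_expint hδ hδ1 hs0) hsa
  have ep' := (abs_lt.mp ep).2
  have em' := (abs_lt.mp em).1
  rw [abs_lt]
  constructor
  · linarith
  · linarith

theorem hardy_littlewood_tauberian
    (f : ℝ → ℝ) (hf_nonneg : ∀ t, 0 < t → 0 ≤ f t)
    (hf_locint : ∀ T : ℝ, 0 < T → MeasureTheory.IntegrableOn f (Set.Ioo 0 T))
    (hf_expint : ∀ s : ℝ, 0 < s →
      MeasureTheory.IntegrableOn (fun t => Real.exp (-s * t) * f t) (Set.Ioi 0))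
    (H a : ℝ) (hH : 0 < H) (ha : 0 < a)
    (hasymp : Filter.Tendsto
      (fun s : ℝ => s ^ a * ∫ t in Set.Ioi (0 : ℝ), Real.exp (-s * t) * f t)
      (nhdsWithin 0 (Set.Ioi 0)) (nhds H)) :
    Filter.Tendsto (fun t : ℝ => t ^ (-a) * ∫ u in (0 : ℝ)..t, f u)
      Filter.atTop (nhds (H / Real.Gamma (1 + a))) := by
  have claim := main_claim hf_nonneg hf_locint hf_expint hH ha hasymp
  have hcomp := claim.comp tendsto_inv_atTop_nhdsGT_zero
  apply hcomp.congr'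
  filter_upwards [eventually_gt_atTop (0:ℝ)] with t ht
  have h1 : (t⁻¹) ^ a = t ^ (-a) := by rw [Real.inv_rpow ht.le, ← Real.rpow_neg ht.le]
  show (t⁻¹) ^ a * ∫ u in Set.Ioc (0:ℝ) (t⁻¹)⁻¹, f u = t ^ (-a) * ∫ u in (0:ℝ)..t, f u
  rw [inv_inv, h1, intervalIntegral.integral_of_le ht.le]
end
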